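/- arXiv:1702.05681 — 6 statements merged into one kernel-verified Lean document; each statement's English description precedes it below -/
import Mathlib

section
/- Let G be a connected simple graph on n vertices and let k be an integer with 3 ≤ k ≤ n-1. Then sdiam_k(G) = n-1 if and only if the number of non-cut vertices of G is at most k. -/
open SimpleGraph

variable {V : Type*}

/-- The set of non-cut vertices of a graph: vertices whose deletion leaves the
graph (induced on the remaining vertices) connected. -/
def noncutVerts (G : SimpleGraph V) : Set V :=
  {v | (G.induce ({v}ᶜ : Set V)).Connected}

/-- The Steiner distance of a finite vertex set `S`: the minimum number of edges
of a connected subgraph of `G` whose vertex set contains `S`. -/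
noncomputable def steinerDist [Fintype V] (G : SimpleGraph V) (S : Finset V) : ℕ :=
  sInf {m | ∃ H : G.Subgraph, H.Connected ∧ ↑S ⊆ H.verts ∧ H.edgeSet.ncard = m}

/-- The Steiner `k`-diameter of `G`: the maximum Steiner distance over all
`k`-element subsets of the vertex set. -/
noncomputable def sdiam [Fintype V] (G : SimpleGraph V) (k : ℕ) : ℕ :=
  (Finset.powersetCard k (Finset.univ : Finset V)).sup (fun S => steinerDist G S)

section Aux
variable {W : Type*}


lemma reach_lift {G H : SimpleGraph W} (h : ∀ a b, G.Adj a b → H.Reachable a b)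
    {u v : W} (hr : G.Reachable u v) : H.Reachable u v := by
  obtain ⟨p⟩ := hr
  induction p with
  | nil => exact Reachable.refl _
  | cons h' _ ih => exact (h _ _ h').trans ih

lemma exists_spanning_tree [Fintype W] (Γ : SimpleGraph W) (h : Γ.Connected) :
    ∃ T : SimpleGraph W, T ≤ Γ ∧ T.IsTree := by
  classical
  generalize hn : Γ.edgeSet.ncard = n
  induction n using Nat.strong_induction_on generalizing Γ with
  | _ n ih =>
  by_cases hac : Γ.IsAcyclic
  · exact ⟨Γ, le_refl _, ⟨h, hac⟩⟩
  · rw [IsAcyclic] at hac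
    push_neg at hac
    obtain ⟨v, c, hc⟩ := hac
    have hne : c.edges ≠ [] := by
      intro he
      have h3 := hc.three_le_length
      have hlen : c.edges.length = c.length := c.length_edges
      rw [he] at hlen
      simp at hlen
      omega
    obtain ⟨e, he⟩ := List.exists_mem_of_ne_nil _ hne
    have heE : e ∈ Γ.edgeSet := c.edges_subset_edgeSet he
    have hnb : ¬ Γ.IsBridge e := by
      rw [isBridge_iff_forall_cycle_notMem heE]
      push_neg
      exact ⟨v, c, hc, he⟩
    induction e using Sym2.ind with
    | _ x y =>
    rw [isBridge_iff] at hnb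
    push_neg at hnb
    have hadj : Γ.Adj x y := heE
    have hreach := hnb
    set Γ' := Γ \ fromEdgeSet {s(x, y)} with hΓ'
    have hle : Γ' ≤ Γ := sdiff_le
    have hconn' : Γ'.Connected := by
      rw [connected_iff] at h ⊢
      refine ⟨fun a b => ?_, h.2⟩
      refine reach_lift (fun a b hab => ?_) (h.1 a b)
      by_cases hee : s(a, b) = s(x, y)
      · rcases Sym2.eq_iff.mp hee with ⟨rfl, rfl⟩ | ⟨rfl, rfl⟩
        · exact hreach
        · exact hreach.symm
      · exact Adj.reachable (by simp [hΓ', hee, hab])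
    have hE' : Γ'.edgeSet = Γ.edgeSet \ {s(x, y)} := by
      rw [hΓ', edgeSet_sdiff, edgeSet_fromEdgeSet, edgeSet_sdiff_sdiff_isDiag]
    have hcard : Γ'.edgeSet.ncard < n := by
      rw [hE', ← hn]
      have hfin : Γ.edgeSet.Finite := Set.toFinite _
      have h1 : (Γ.edgeSet \ {s(x, y)}).ncard = Γ.edgeSet.ncard - 1 :=
        Set.ncard_diff_singleton_of_mem heE
      rw [h1]
      have h2 : 0 < Γ.edgeSet.ncard := (Set.ncard_pos hfin).mpr ⟨_, heE⟩
      omega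
    obtain ⟨T, hT1, hT2⟩ := ih _ hcard Γ' hconn' rfl
    exact ⟨T, hT1.trans hle, hT2⟩

lemma tree_edge_ncard [Fintype W] {T : SimpleGraph W} (hT : T.IsTree) :
    T.edgeSet.ncard + 1 = Fintype.card W := by
  classical
  haveI : Fintype T.edgeSet := (Set.toFinite _).fintype
  have h := hT.card_edgeFinset
  rwa [Set.ncard_eq_toFinset_card' T.edgeSet]

lemma conn_edge_lb [Fintype W] {Γ : SimpleGraph W} (h : Γ.Connected) :
    Fintype.card W - 1 ≤ Γ.edgeSet.ncard := by
  obtain ⟨T, hle, hT⟩ := exists_spanning_tree Γ h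
  have := tree_edge_ncard hT
  have hsub := Set.ncard_le_ncard (edgeSet_mono hle) (Set.toFinite _)
  omega

variable {G : SimpleGraph W}

lemma subgraph_edge_ncard (H : G.Subgraph) : H.edgeSet.ncard = H.coe.edgeSet.ncard := by
  rw [← Subgraph.image_coe_edgeSet_coe]
  exact Set.ncard_image_of_injective H.coe.edgeSet (Sym2.map.injective Subtype.val_injective)

lemma subgraph_lb [Fintype W] (H : G.Subgraph) (hc : H.Connected) (hv : H.verts = Set.univ) :
    Fintype.card W - 1 ≤ H.edgeSet.ncard := by
  classical
  haveI : Fintype ↥H.verts := (Set.toFinite _).fintype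
  rw [subgraph_edge_ncard]
  have h1 := conn_edge_lb hc.coe
  have h2 : Fintype.card ↥H.verts = Fintype.card W := by
    rw [← Nat.card_eq_fintype_card, Nat.card_coe_set_eq, hv, Set.ncard_univ,
      Nat.card_eq_fintype_card]
  omega

lemma exists_tree_subgraph [Fintype W] (H : G.Subgraph) (hc : H.Connected) :
    ∃ H' : G.Subgraph, H'.Connected ∧ H'.verts = H.verts ∧
      H'.edgeSet.ncard = H.verts.ncard - 1 := by
  classical
  haveI : Fintype ↥H.verts := (Set.toFinite _).fintype
  obtain ⟨T, hle, hT⟩ := exists_spanning_tree H.coe hc.coe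
  have pf1 : ∀ {a b : W}, (∃ (ha : a ∈ H.verts) (hb : b ∈ H.verts), T.Adj ⟨a, ha⟩ ⟨b, hb⟩) →
      G.Adj a b := by
    rintro a b ⟨ha, hb, h⟩
    exact H.adj_sub (hle h)
  have pf2 : ∀ {a b : W}, (∃ (ha : a ∈ H.verts) (hb : b ∈ H.verts), T.Adj ⟨a, ha⟩ ⟨b, hb⟩) →
      a ∈ H.verts := by
    rintro a b ⟨ha, _, _⟩
    exact ha
  have pf3 : Symmetric fun a b =>
      ∃ (ha : a ∈ H.verts) (hb : b ∈ H.verts), T.Adj ⟨a, ha⟩ ⟨b, hb⟩ := by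
    rintro a b ⟨ha, hb, h⟩
    exact ⟨hb, ha, h.symm⟩
  set H' : G.Subgraph :=
    ⟨H.verts, fun a b => ∃ (ha : a ∈ H.verts) (hb : b ∈ H.verts), T.Adj ⟨a, ha⟩ ⟨b, hb⟩,
      pf1, pf2, ⟨fun _ _ h => pf3 h⟩⟩ with hH'
  have hcoe : H'.coe = T := by
    ext ⟨a, ha⟩ ⟨b, hb⟩
    exact ⟨fun ⟨_, _, h⟩ => h, fun h => ⟨ha, hb, h⟩⟩
  refine ⟨H', ?_, rfl, ?_⟩
  · rw [Subgraph.connected_iff', hcoe]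
    exact hT.isConnected
  · rw [subgraph_edge_ncard, hcoe]
    have := tree_edge_ncard hT
    rw [← Nat.card_eq_fintype_card, Nat.card_coe_set_eq] at this
    omega

lemma walk_induce {s : Set W} {a b : W} (p : G.Walk a b) (hp : ∀ x ∈ p.support, x ∈ s)
    (ha : a ∈ s) (hb : b ∈ s) : (G.induce s).Reachable ⟨a, ha⟩ ⟨b, hb⟩ := by
  induction p with
  | nil => exact Reachable.refl _
  | @cons a c b h q ih =>
      have hc : c ∈ s := hp c (by simp [Walk.support_cons])
      have hadj : (G.induce s).Adj ⟨a, ha⟩ ⟨c, hc⟩ := h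
      exact hadj.reachable.trans (ih (fun x hx => hp x (by simp [Walk.support_cons, hx])) hc hb)

lemma induce_compl_connected_iff {v : W} (hW : ∃ x : W, x ≠ v) :
    (G.induce ({v}ᶜ : Set W)).Connected ↔
      ∀ a b : W, a ≠ v → b ≠ v → ∃ p : G.Walk a b, v ∉ p.support := by
  constructor
  · intro h a b hav hbv
    obtain ⟨pw⟩ := h.preconnected ⟨a, hav⟩ ⟨b, hbv⟩
    refine ⟨pw.map ⟨Subtype.val, fun h => h⟩, fun hv => ?_⟩
    rw [Walk.support_map] at hv
    obtain ⟨x, _, hx⟩ := List.mem_map.mp hv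
    exact x.2 hx
  · intro h
    rw [connected_iff]
    constructor
    · rintro ⟨a, hav⟩ ⟨b, hbv⟩
      obtain ⟨p, hp⟩ := h a b hav hbv
      have hs : ∀ x ∈ p.support, x ∈ ({v}ᶜ : Set W) := by
        intro x hx
        simp only [Set.mem_compl_iff, Set.mem_singleton_iff]
        rintro rfl
        exact hp hx
      exact walk_induce p hs hav hbv
    · obtain ⟨x, hx⟩ := hW
      exact ⟨⟨x, hx⟩⟩

lemma key_lemma [Fintype W] (hG : G.Connected) (H : G.Subgraph)
    (hH : H.Connected) (hnc : noncutVerts G ⊆ H.verts) : H.verts = Set.univ := by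
  classical
  by_contra hne
  have : ∃ v, v ∉ H.verts := by
    by_contra hall
    push_neg at hall
    exact hne (Set.eq_univ_iff_forall.mpr hall)
  obtain ⟨v, hv⟩ := this
  obtain ⟨h0, hh0⟩ := hH.nonempty
  have hh0v : h0 ≠ v := fun h => hv (h ▸ hh0)
  have hex : ∃ x : W, x ≠ v := ⟨h0, hh0v⟩
  have hvcut : ¬(G.induce ({v}ᶜ : Set W)).Connected := fun h => hv (hnc h)
  set B : Set W := {w | w ≠ v ∧ ¬∃ p : G.Walk h0 w, v ∉ p.support} with hB
  have hBne : B.Nonempty := by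
    rw [induce_compl_connected_iff hex] at hvcut
    push_neg at hvcut
    obtain ⟨a, b, hav, hbv, hab⟩ := hvcut
    by_cases hA : ∃ p : G.Walk h0 a, v ∉ p.support
    · refine ⟨b, hbv, fun hq => ?_⟩
      obtain ⟨q, hq⟩ := hq
      obtain ⟨p, hp⟩ := hA
      refine absurd (hab (p.reverse.append q)) ?_
      rw [Walk.mem_support_append_iff]
      push_neg
      exact ⟨by rwa [Walk.support_reverse, List.mem_reverse], hq⟩
    · exact ⟨a, hav, hA⟩
  obtain ⟨u, huB, hmax⟩ := Set.exists_max_image B (fun w => G.dist v w) (Set.toFinite B) hBne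
  have huv : u ≠ v := huB.1
  have huH : u ∈ noncutVerts G := by
    by_contra hcut
    have hncon : ¬(G.induce ({u}ᶜ : Set W)).Connected := hcut
    rw [induce_compl_connected_iff ⟨v, huv.symm⟩] at hncon
    push_neg at hncon
    obtain ⟨a, b, hau, hbu, hab⟩ := hncon
    have hw : ∃ w, w ≠ u ∧ ∀ p : G.Walk v w, u ∈ p.support := by
      by_cases hA : ∃ p : G.Walk v a, u ∉ p.support
      · refine ⟨b, hbu, fun q => ?_⟩
        by_contra hq
        obtain ⟨p, hp⟩ := hA
        refine absurd (hab (p.reverse.append q)) ?_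
        rw [Walk.mem_support_append_iff]
        push_neg
        exact ⟨by rwa [Walk.support_reverse, List.mem_reverse], hq⟩
      · push_neg at hA
        exact ⟨a, hau, hA⟩
    obtain ⟨w, hwu, hwall⟩ := hw
    have hvu : v ≠ u := huv.symm
    have hwv : w ≠ v := by
      rintro rfl
      have := hwall Walk.nil
      simp only [Walk.support_nil, List.mem_singleton] at this
      exact hvu this.symm
    -- a walk from u to w avoiding v
    obtain ⟨p0⟩ := hG.preconnected v w
    set q : G.Walk v w := (p0.toPath : G.Walk v w) with hq
    have hqp : q.IsPath := p0.toPath.2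
    have huq : u ∈ q.support := hwall q
    set r := q.dropUntil u huq with hr
    have hrv : v ∉ r.support := by
      intro hv'
      have hnodup : q.support.Nodup := hqp.support_nodup
      rw [← q.take_spec huq, Walk.support_append] at hnodup
      have hvtail : v ∈ r.support.tail := by
        rw [Walk.support_eq_cons r] at hv'
        rcases List.mem_cons.mp hv' with h' | h'
        · exact absurd h'.symm hvu.symm
        · exact h'
      exact (List.disjoint_of_nodup_append hnodup) (Walk.start_mem_support _) hvtail
    have hwB : w ∈ B := by
      refine ⟨hwv, fun ht => ?_⟩
      obtain ⟨t, ht⟩ := ht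
      refine huB.2 ⟨t.append r.reverse, ?_⟩
      rw [Walk.mem_support_append_iff]
      push_neg
      exact ⟨ht, by rwa [Walk.support_reverse, List.mem_reverse]⟩
    have hd : G.dist v u + 1 ≤ G.dist v w := by
      obtain ⟨p, hp⟩ := (hG.preconnected v w).exists_walk_length_eq_dist
      have hup : u ∈ p.support := hwall p
      have hlen : (p.takeUntil u hup).length + (p.dropUntil u hup).length = p.length := by
        rw [← Walk.length_append, p.take_spec hup]
      have h1 : G.dist v u ≤ (p.takeUntil u hup).length := dist_le _
      have h2 : 1 ≤ (p.dropUntil u hup).length := by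
        rcases Nat.eq_zero_or_pos (p.dropUntil u hup).length with h' | h'
        · exact absurd (Walk.eq_of_length_eq_zero h') hwu.symm
        · exact h'
      omega
    have := hmax w hwB
    omega
  have huV : u ∈ H.verts := hnc huH
  refine huB.2 ?_
  obtain ⟨pw⟩ := hH ⟨h0, hh0⟩ ⟨u, huV⟩
  refine ⟨pw.map H.hom, fun hmem => ?_⟩
  replace hmem : v ∈ (pw.map H.hom).support := hmem
  rw [Walk.support_map] at hmem
  obtain ⟨x, _, hx⟩ := List.mem_map.mp hmem
  exact hv (hx ▸ x.2)

end Aux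

lemma steinerDist_le_of_subgraph [Fintype V] {G : SimpleGraph V} {S : Finset V} (H : G.Subgraph)
    (hc : H.Connected) (hs : ↑S ⊆ H.verts) : steinerDist G S ≤ H.edgeSet.ncard :=
  Nat.sInf_le ⟨H, hc, hs, rfl⟩

lemma top_connected [Fintype V] {G : SimpleGraph V} (hG : G.Connected) :
    (⊤ : G.Subgraph).Connected := by
  rw [Subgraph.connected_iff']
  exact Subgraph.topIso.connected_iff.mpr hG

lemma steinerDist_le_card [Fintype V] {G : SimpleGraph V} (hG : G.Connected) (S : Finset V) :
    steinerDist G S ≤ Fintype.card V - 1 := by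
  obtain ⟨H', hc, hv, he⟩ := exists_tree_subgraph _ (top_connected hG)
  rw [Subgraph.verts_top] at hv
  have h := steinerDist_le_of_subgraph (S := S) H' hc (by rw [hv]; exact Set.subset_univ _)
  rwa [he, Subgraph.verts_top, Set.ncard_univ, Nat.card_eq_fintype_card] at h

theorem stmt_3 [Fintype V] (G : SimpleGraph V) (k : ℕ)
    (hk3 : 3 ≤ k) (hkn : k ≤ Fintype.card V - 1) (hG : G.Connected) :
    sdiam G k = Fintype.card V - 1 ↔ (noncutVerts G).ncard ≤ k := by
  classical
  have hn4 : 4 ≤ Fintype.card V := by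
    rcases Nat.eq_zero_or_pos (Fintype.card V) with h | h
    · rw [h] at hkn; omega
    · omega
  have hub : sdiam G k ≤ Fintype.card V - 1 :=
    Finset.sup_le fun S _ => steinerDist_le_card hG S
  constructor
  · intro hsd
    by_contra hlt
    push_neg at hlt
    have hle2 : sdiam G k ≤ Fintype.card V - 2 := by
      refine Finset.sup_le fun S hS => ?_
      rw [Finset.mem_powersetCard_univ] at hS
      have hcard : S.card < (noncutVerts G).toFinset.card := by
        rw [← Set.ncard_eq_toFinset_card']
        omega
      obtain ⟨v, hvnc, hvS⟩ : ∃ v ∈ (noncutVerts G).toFinset, v ∉ S := by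
        by_contra hcon
        push_neg at hcon
        exact absurd (Finset.card_le_card hcon) (Nat.not_le.mpr hcard)
      rw [Set.mem_toFinset] at hvnc
      have hconn : ((⊤ : G.Subgraph).induce ({v}ᶜ : Set V)).Connected :=
        (connected_induce_iff).mp hvnc
      obtain ⟨H', hc', hv', he'⟩ := exists_tree_subgraph _ hconn
      rw [Subgraph.induce_verts] at hv' he'
      have hsub : ↑S ⊆ H'.verts := by
        rw [hv']
        intro x hx
        simp only [Set.mem_compl_iff, Set.mem_singleton_iff]
        rintro rfl
        exact hvS hx
      have hcompl : ({v}ᶜ : Set V).ncard = Fintype.card V - 1 := by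
        rw [Set.compl_eq_univ_diff, Set.ncard_diff (Set.subset_univ _), Set.ncard_univ,
          Nat.card_eq_fintype_card, Set.ncard_singleton]
      have h := steinerDist_le_of_subgraph (S := S) H' hc' hsub
      rw [he', hcompl] at h
      omega
    omega
  · intro hnck
    have hkcard : k ≤ Fintype.card V := by omega
    obtain ⟨S, hS1, hS2, hS3⟩ := Finset.exists_subsuperset_card_eq (n := k)
      ((noncutVerts G).toFinset.subset_univ)
      (by rw [← Set.ncard_eq_toFinset_card']; exact hnck)
      (by simpa using hkcard)
    have hSmem : S ∈ Finset.powersetCard k (Finset.univ : Finset V) :=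
      Finset.mem_powersetCard_univ.mpr hS3
    have hlow : Fintype.card V - 1 ≤ steinerDist G S := by
      have hne : {m | ∃ H : G.Subgraph, H.Connected ∧ ↑S ⊆ H.verts ∧
          H.edgeSet.ncard = m}.Nonempty := by
        refine ⟨(⊤ : G.Subgraph).edgeSet.ncard, ⊤, top_connected hG, ?_, rfl⟩
        rw [Subgraph.verts_top]
        exact Set.subset_univ _
      obtain ⟨H, hHc, hHs, hHe⟩ := Nat.sInf_mem hne
      have hsub : noncutVerts G ⊆ H.verts := by
        intro x hx
        exact hHs (hS1 (Set.mem_toFinset.mpr hx))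
      have huniv := key_lemma hG H hHc hsub
      have hlb := subgraph_lb H hHc huniv
      rw [hHe] at hlb
      exact hlb
    have hge := Finset.le_sup (f := fun S => steinerDist G S) hSmem
    have : Fintype.card V - 1 ≤ sdiam G k := le_trans hlow hge
    omega
end

section
/- Let G be a connected simple graph on n vertices and let k be an integer with 3 ≤ k ≤ n-2. Then sdiam_k(G) ≤ n-2 if and only if G has at least k+1 non-cut vertices. -/
open SimpleGraph

variable {V : Type*}

lemma myReachDel {W : Type*} {G : SimpleGraph W} {x y : W}
    (hR : (G \ fromEdgeSet {s(x,y)}).Reachable x y) {a b : W} (h : G.Reachable a b) :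
    (G \ fromEdgeSet {s(x,y)}).Reachable a b := by
  obtain ⟨p⟩ := h
  induction p with
  | nil => rfl
  | @cons u c w h q ih =>
    refine Reachable.trans ?_ ih
    by_cases he : s(u, c) = s(x, y)
    · rw [Sym2.eq_iff] at he
      rcases he with ⟨rfl, rfl⟩ | ⟨rfl, rfl⟩
      · exact hR
      · exact hR.symm
    · exact Adj.reachable (by simp [sdiff_adj, fromEdgeSet_adj, he, h, h.ne])

lemma myExistsTree {W : Type*} [Fintype W] :
    ∀ (n : ℕ) (G : SimpleGraph W), G.edgeSet.ncard ≤ n → G.Connected →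
      ∃ T : SimpleGraph W, T ≤ G ∧ T.IsTree := by
  intro n
  induction n with
  | zero =>
    intro G hn hG
    refine ⟨G, le_refl _, hG, ?_⟩
    intro v c hc
    have h3 := hc.three_le_length
    have : c.edges ≠ [] := by
      intro h
      rw [← Walk.length_edges, h] at h3; simp at h3
    obtain ⟨e, he⟩ := List.exists_mem_of_ne_nil _ this
    have heG : e ∈ G.edgeSet := c.edges_subset_edgeSet he
    have : G.edgeSet.Nonempty := ⟨e, heG⟩
    rw [← Set.ncard_pos (Set.toFinite _)] at this
    omega
  | succ n ih =>
    intro G hn hG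
    by_cases hac : G.IsAcyclic
    · exact ⟨G, le_refl _, hG, hac⟩
    · rw [IsAcyclic] at hac
      push_neg at hac
      obtain ⟨v, c, hc⟩ := hac
      have h3 := hc.three_le_length
      have hne : c.edges ≠ [] := by
        intro h
        rw [← Walk.length_edges, h] at h3; simp at h3
      obtain ⟨e, he⟩ := List.exists_mem_of_ne_nil _ hne
      induction e using Sym2.ind with
      | _ x y =>
      have hadj : G.Adj x y := c.adj_of_mem_edges he
      have hnb : ¬ G.IsBridge s(x, y) := by
        rw [isBridge_iff_adj_and_forall_cycle_notMem]
        push_neg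
        exact ⟨v, c, hc, he⟩
        exact hadj
      rw [isBridge_iff] at hnb
      push_neg at hnb
      have hR := hnb
      set G' := G \ fromEdgeSet {s(x, y)} with hG'
      have hconn' : G'.Connected := by
        have : Nonempty W := hG.nonempty
        exact ⟨fun a b => myReachDel hR (hG.preconnected a b)⟩
      have hEs : G'.edgeSet = G.edgeSet \ {s(x, y)} := by
        rw [hG', edgeSet_sdiff, edgeSet_fromEdgeSet, edgeSet_sdiff_sdiff_isDiag]
      have hlt : G'.edgeSet.ncard ≤ n := by
        rw [hEs]
        have := Set.ncard_diff_singleton_lt_of_mem (G.mem_edgeSet.mpr hadj) (Set.toFinite _)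
        omega
      obtain ⟨T, hTle, hT⟩ := ih G' hlt hconn'
      exact ⟨T, le_trans hTle (sdiff_le), hT⟩


lemma myTreeCount {W : Type*} [Fintype W] (G : SimpleGraph W) (hG : G.Connected) :
    ∃ T : SimpleGraph W, T ≤ G ∧ T.Connected ∧ T.edgeSet.ncard + 1 = Fintype.card W := by
  classical
  obtain ⟨T, hTle, hT⟩ := myExistsTree G.edgeSet.ncard G (le_refl _) hG
  letI : Fintype T.edgeSet := (Set.toFinite T.edgeSet).fintype
  have hc := hT.card_edgeFinset
  refine ⟨T, hTle, hT.isConnected, ?_⟩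
  rwa [Set.ncard_eq_toFinset_card' ] 

lemma myCardLeEdges {W : Type*} [Fintype W] (G : SimpleGraph W) (hG : G.Connected) :
    Fintype.card W ≤ G.edgeSet.ncard + 1 := by
  obtain ⟨T, hTle, _, hcount⟩ := myTreeCount G hG
  have : T.edgeSet.ncard ≤ G.edgeSet.ncard :=
    Set.ncard_le_ncard (edgeSet_mono hTle) (Set.toFinite _)
  omega

-- subgraph construction
lemma myExistsSubgraph [Fintype V] (G : SimpleGraph V) {s : Set V}
    (hconn : (G.induce s).Connected) :
    ∃ H : G.Subgraph, H.Connected ∧ H.verts = s ∧ H.edgeSet.ncard + 1 = s.ncard := by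
  classical
  obtain ⟨T, hTle, hTconn, hcount⟩ := myTreeCount (G.induce s) hconn
  let f : T →g G := (Embedding.induce s).toHom.comp (Hom.ofLE hTle)
  have hfval : ∀ x, f x = x.val := fun x => rfl
  have hf : Function.Injective f := fun a b h => by
    rw [hfval, hfval] at h; exact Subtype.val_injective h
  refine ⟨Subgraph.map f ⊤, ?_, ?_, ?_⟩
  · rw [Subgraph.connected_iff_forall_exists_walk_subgraph]
    constructor
    · obtain ⟨x⟩ := hTconn.nonempty
      exact ⟨f x, Set.mem_image_of_mem f (Set.mem_univ x)⟩
    · rintro u v hu hv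
      simp only [Subgraph.map_verts, Subgraph.verts_top, Set.image_univ, Set.mem_range] at hu hv
      obtain ⟨x, rfl⟩ := hu
      obtain ⟨y, rfl⟩ := hv
      obtain ⟨q⟩ := hTconn.preconnected x y
      refine ⟨q.map f, ?_⟩
      rw [Walk.toSubgraph_map]
      exact Subgraph.map_mono le_top
  · rw [Subgraph.map_verts, Subgraph.verts_top, Set.image_univ]
    have : Set.range f = s := by
      have : Set.range f = Set.range (Subtype.val : s → V) := by
        ext z; simp [hfval]
      rw [this, Subtype.range_coe]
    exact this
  · have hedge : (Subgraph.map f ⊤).edgeSet = Sym2.map f '' T.edgeSet := by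
      ext e
      refine Sym2.ind (fun a b => ?_) e
      simp only [Subgraph.mem_edgeSet, Subgraph.map_adj, Relation.Map, Subgraph.top_adj,
        Set.mem_image]
      constructor
      · rintro ⟨u, v, huv, rfl, rfl⟩
        exact ⟨s(u, v), huv, rfl⟩
      · rintro ⟨e', he', hmap⟩
        revert he' hmap
        refine Sym2.ind (fun u v => ?_) e'
        intro huv hmap
        rw [Sym2.map_pair_eq, Sym2.eq_iff] at hmap
        rcases hmap with ⟨rfl, rfl⟩ | ⟨rfl, rfl⟩
        · exact ⟨u, v, huv, rfl, rfl⟩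
        · exact ⟨v, u, huv.symm, rfl, rfl⟩
    rw [hedge, Set.ncard_image_of_injective _ (Sym2.map.injective hf), hcount]
    rw [Set.ncard_eq_toFinset_card', Set.toFinset_card]


lemma myExistsNoncut [Fintype V] (G : SimpleGraph V) (hG : G.Connected) :
    ∀ (n : ℕ) (W : Set V), Wᶜ.ncard ≤ n → W.Nonempty → (G.induce W).Connected →
      W ≠ Set.univ → ∃ v, v ∉ W ∧ (G.induce ({v}ᶜ : Set V)).Connected := by
  intro n
  induction n with
  | zero =>
    intro W hn _ _ hWu
    exfalso
    apply hWu
    rw [← Set.compl_empty_iff]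
    have := Set.ncard_eq_zero (Set.toFinite Wᶜ) |>.mp (Nat.le_zero.mp hn)
    exact this
  | succ n ih =>
    intro W hn hne hconn hWu
    obtain ⟨w0, hw0⟩ := hne
    have : Wᶜ.Nonempty := by
      rw [Set.nonempty_compl]; exact hWu
    obtain ⟨u0, hu0⟩ := this
    obtain ⟨p⟩ := hG.preconnected w0 u0
    obtain ⟨d, _, hdfst, hdsnd⟩ := p.exists_boundary_dart W hw0 hu0
    set v := d.snd with hv
    by_cases hnc : (G.induce ({v}ᶜ : Set V)).Connected
    · exact ⟨v, hdsnd, hnc⟩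
    · have hins : (G.induce (insert v W)).Connected := by
        have h2 : (G.induce ({d.fst, v} : Set V)).Connected :=
          induce_pair_connected_of_adj d.adj
        have := connected_induce_union hconn.preconnected h2.preconnected hdfst
          (by simp : v ∈ ({d.fst, v} : Set V)) d.adj
        have hset : W ∪ {d.fst, v} = insert v W := by
          ext x
          simp only [Set.mem_union, Set.mem_insert_iff, Set.mem_singleton_iff]
          constructor
          · rintro (h | h | rfl)
            · exact Or.inr h
            · exact Or.inr (h ▸ hdfst)
            · exact Or.inl rfl
          · rintro (rfl | h)
            · exact Or.inr (Or.inr rfl)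
            · exact Or.inl h
        rwa [hset] at this
      have hWu' : insert v W ≠ Set.univ := by
        intro h
        apply hnc
        have : W = ({v}ᶜ : Set V) := by
          ext x
          simp only [Set.mem_compl_iff, Set.mem_singleton_iff]
          constructor
          · rintro hx rfl; exact hdsnd hx
          · intro hx
            have := Set.eq_univ_iff_forall.mp h x
            rcases Set.mem_insert_iff.mp this with rfl | h'
            · exact absurd rfl hx
            · exact h'
        rwa [← this]
      have hcard : (insert v W)ᶜ.ncard ≤ n := by
        have h1 : (insert v W)ᶜ = Wᶜ \ {v} := by
          ext x
          simp only [Set.mem_compl_iff, Set.mem_insert_iff, Set.mem_diff,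
            Set.mem_singleton_iff]
          tauto
        have h2 := Set.ncard_diff_singleton_lt_of_mem (Set.mem_compl hdsnd) (Set.toFinite _)
        rw [h1]
        omega
      obtain ⟨v', hv', hnc'⟩ := ih (insert v W) hcard ⟨v, Set.mem_insert v W⟩ hins hWu'
      exact ⟨v', fun h => hv' (Set.mem_insert_of_mem _ h), hnc'⟩


theorem stmt_4 [Fintype V] (G : SimpleGraph V) (k : ℕ)
    (hk3 : 3 ≤ k) (hkn : k ≤ Fintype.card V - 2) (hG : G.Connected) :
    sdiam G k ≤ Fintype.card V - 2 ↔ k + 1 ≤ (noncutVerts G).ncard := by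
  classical
  set n := Fintype.card V with hn
  have hn5 : 5 ≤ n := by
    have : 3 ≤ n - 2 := le_trans hk3 hkn
    omega
  set N := (Set.toFinite (noncutVerts G)).toFinset with hN
  have hNcard : N.card = (noncutVerts G).ncard := by
    rw [Set.ncard_eq_toFinset_card _ (Set.toFinite (noncutVerts G))]
  constructor
  · -- forward
    intro h
    by_contra hcon
    push_neg at hcon
    have hNk : N.card ≤ k := by omega
    obtain ⟨S, hNS, -, hScard⟩ := Finset.exists_subsuperset_card_eq
      (Finset.subset_univ N) hNk (by rw [Finset.card_univ]; omega)
    have hSmem : S ∈ Finset.powersetCard k (Finset.univ : Finset V) := by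
      rw [Finset.mem_powersetCard]
      exact ⟨Finset.subset_univ S, hScard⟩
    have hsd : steinerDist G S ≤ n - 2 :=
      le_trans (Finset.le_sup hSmem) h
    have htop : (⊤ : G.Subgraph).Connected := by
      rw [Subgraph.connected_iff']
      exact (Subgraph.topIso (G := G)).connected_iff.mpr hG
    have hMne : {m | ∃ H : G.Subgraph, H.Connected ∧ ↑S ⊆ H.verts ∧ H.edgeSet.ncard = m}.Nonempty :=
      ⟨_, ⊤, htop, by simp [Subgraph.verts_top], rfl⟩
    have hmem := Nat.sInf_mem hMne
    obtain ⟨H, Hconn, hSsub, hHcard⟩ := hmem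
    have hverts : H.verts = Set.univ := by
      by_contra hne
      obtain ⟨v, hv1, hv2⟩ := myExistsNoncut G hG (H.vertsᶜ.ncard) H.verts le_rfl
        Hconn.nonempty Hconn.induce_verts hne
      have hvN : v ∈ N := (Set.toFinite (noncutVerts G)).mem_toFinset.mpr hv2
      exact hv1 (hSsub (hNS hvN))
    have h1 : Fintype.card ↥H.verts = n := by
      have e1 : H.verts.ncard = Fintype.card ↥H.verts := by
        rw [Set.ncard_eq_toFinset_card', Set.toFinset_card]
      rw [← e1, hverts, Set.ncard_univ, Nat.card_eq_fintype_card]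
    have h2 : H.coe.edgeSet.ncard = H.edgeSet.ncard := by
      rw [← Subgraph.image_coe_edgeSet_coe,
        Set.ncard_image_of_injective _ (Sym2.map.injective Subtype.val_injective)]
    have h3 := myCardLeEdges H.coe (Subgraph.connected_iff'.mp Hconn)
    rw [h1, h2] at h3
    have : steinerDist G S = H.edgeSet.ncard := hHcard.symm
    omega
  · -- backward
    intro h
    apply Finset.sup_le
    intro S hS
    rw [Finset.mem_powersetCard] at hS
    obtain ⟨-, hScard⟩ := hS
    have hns : ¬ N ⊆ S := by
      intro hsub
      have := Finset.card_le_card hsub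
      omega
    obtain ⟨v, hvN, hvS⟩ := Finset.not_subset.mp hns
    have hv : (G.induce ({v}ᶜ : Set V)).Connected := (Set.toFinite (noncutVerts G)).mem_toFinset.mp hvN
    obtain ⟨H, Hconn, hverts, hcount⟩ := myExistsSubgraph G hv
    have hcompl : ({v}ᶜ : Set V).ncard = n - 1 := by
      rw [Set.ncard_eq_toFinset_card', Set.toFinset_compl, Set.toFinset_singleton,
        Finset.card_compl, Finset.card_singleton]
    have hEcard : H.edgeSet.ncard = n - 2 := by
      rw [hcompl] at hcount
      omega
    apply Nat.sInf_le
    refine ⟨H, Hconn, ?_, hEcard⟩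
    rw [hverts]
    intro x hx
    simp only [Set.mem_compl_iff, Set.mem_singleton_iff]
    rintro rfl
    exact hvS hx
end

section
/- Let G be a connected simple graph on n ≥ 5 vertices. Then sdiam_4(G) = 3 if and only if δ(G) ≥ n-3 and the complement of G contains no 4-cycle as a subgraph. -/
open SimpleGraph

variable {V : Type*}

lemma my_exists_closer {W : Type*} (H : SimpleGraph W) {v r : W} (h : H.Reachable v r)
    (hvr : v ≠ r) : ∃ u, H.Adj v u ∧ H.dist u r < H.dist v r := by
  obtain ⟨p, hp⟩ := h.exists_walk_length_eq_dist
  cases p with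
  | nil => exact absurd rfl hvr
  | cons h' q =>
    refine ⟨_, h', lt_of_le_of_lt (SimpleGraph.dist_le q) ?_⟩
    rw [← hp]
    simp [SimpleGraph.Walk.length_cons]

lemma my_conn_card_le {W : Type*} [Fintype W] (H : SimpleGraph W) (hc : H.Connected) :
    Fintype.card W ≤ H.edgeSet.ncard + 1 := by
  classical
  obtain ⟨r⟩ := hc.nonempty
  have key : ∀ v : W, v ≠ r → ∃ u, H.Adj v u ∧ H.dist u r < H.dist v r :=
    fun v hv => my_exists_closer H (hc v r) hv
  choose! u hadj hdist using key
  have hinj : Set.InjOn (fun v => s(v, u v)) (Set.univ \ {r}) := by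
    intro x hx y hy hxy
    simp only [Sym2.eq_iff] at hxy
    rcases hxy with ⟨rfl, -⟩ | ⟨h1, h2⟩
    · rfl
    · exfalso
      have d1 := hdist x (by simpa using hx.2)
      have d2 := hdist y (by simpa using hy.2)
      rw [h2] at d1
      rw [← h1] at d2
      omega
  have hle : (Set.univ \ {r} : Set W).ncard ≤ H.edgeSet.ncard :=
    Set.ncard_le_ncard_of_injOn _ (fun a ha => (hadj a (by simpa using ha.2)))
      hinj (Set.toFinite _)
  have h1 : (Set.univ \ {r} : Set W).ncard + 1 = (Set.univ : Set W).ncard :=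
    Set.ncard_diff_singleton_add_one (Set.mem_univ r) (Set.toFinite _)
  rw [Set.ncard_univ, Nat.card_eq_fintype_card] at h1
  omega

lemma my_subgraph_verts_le [Fintype V] {G : SimpleGraph V} (H : G.Subgraph)
    (hc : H.Connected) : H.verts.ncard ≤ H.edgeSet.ncard + 1 := by
  classical
  have hfin : Fintype H.verts := H.verts.toFinite.fintype
  have h := my_conn_card_le H.coe hc.coe
  have hcard : Fintype.card H.verts = H.verts.ncard := by
    rw [← Nat.card_coe_set_eq, Nat.card_eq_fintype_card]
  have himg : H.coe.edgeSet.ncard = H.edgeSet.ncard := by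
    rw [← H.image_coe_edgeSet_coe]
    exact (Set.ncard_image_of_injective _ (Sym2.map.injective Subtype.coe_injective)).symm
  omega

lemma my_tree_exists {G : SimpleGraph V} {a b c d : V}
    (hab : G.Adj a b) (hbc : G.Adj b c) (hcd : G.Adj c d)
    (hac : a ≠ c) (had : a ≠ d) (hbd : b ≠ d) :
    ∃ H : G.Subgraph, H.Connected ∧ H.verts = {a, b, c, d} ∧ H.edgeSet.ncard = 3 := by
  classical
  refine ⟨(G.subgraphOfAdj hab ⊔ G.subgraphOfAdj hbc) ⊔ G.subgraphOfAdj hcd, ?_, ?_, ?_⟩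
  · refine Subgraph.connected_sup ?_ (Subgraph.subgraphOfAdj_connected hcd).preconnected ⟨c, ?_⟩
    · exact (Subgraph.connected_sup (Subgraph.subgraphOfAdj_connected hab).preconnected
        (Subgraph.subgraphOfAdj_connected hbc).preconnected ⟨b, by simp⟩).preconnected
    · simp
  · simp only [Subgraph.verts_sup, subgraphOfAdj_verts]
    ext x; simp; tauto
  · have : ((G.subgraphOfAdj hab ⊔ G.subgraphOfAdj hbc) ⊔ G.subgraphOfAdj hcd).edgeSet
        = {s(a,b), s(b,c), s(c,d)} := by
      simp only [Subgraph.edgeSet_sup, edgeSet_subgraphOfAdj]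
      ext e; simp; tauto
    have e12 : s(a,b) ≠ s(b,c) := by
      rw [Ne, Sym2.eq_iff]; rintro (⟨h1, h2⟩ | ⟨h1, h2⟩) <;> subst_vars <;> simp_all
    have e13 : s(a,b) ≠ s(c,d) := by
      rw [Ne, Sym2.eq_iff]; rintro (⟨h1, h2⟩ | ⟨h1, h2⟩) <;> subst_vars <;> simp_all
    have e23 : s(b,c) ≠ s(c,d) := by
      rw [Ne, Sym2.eq_iff]; rintro (⟨h1, h2⟩ | ⟨h1, h2⟩) <;> subst_vars <;> simp_all
    rw [this, Set.ncard_insert_of_notMem (by simp [e12, e13]) (Set.toFinite _),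
      Set.ncard_pair e23]

lemma my_star_exists {G : SimpleGraph V} {a b c d : V}
    (hab : G.Adj a b) (hac : G.Adj a c) (had : G.Adj a d)
    (hbc : b ≠ c) (hbd : b ≠ d) (hcd : c ≠ d) :
    ∃ H : G.Subgraph, H.Connected ∧ H.verts = {a, b, c, d} ∧ H.edgeSet.ncard = 3 := by
  classical
  refine ⟨(G.subgraphOfAdj hab ⊔ G.subgraphOfAdj hac) ⊔ G.subgraphOfAdj had, ?_, ?_, ?_⟩
  · refine Subgraph.connected_sup ?_ (Subgraph.subgraphOfAdj_connected had).preconnected ⟨a, ?_⟩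
    · exact (Subgraph.connected_sup (Subgraph.subgraphOfAdj_connected hab).preconnected
        (Subgraph.subgraphOfAdj_connected hac).preconnected ⟨a, by simp⟩).preconnected
    · simp
  · simp only [Subgraph.verts_sup, subgraphOfAdj_verts]
    ext x; simp; tauto
  · have : ((G.subgraphOfAdj hab ⊔ G.subgraphOfAdj hac) ⊔ G.subgraphOfAdj had).edgeSet
        = {s(a,b), s(a,c), s(a,d)} := by
      simp only [Subgraph.edgeSet_sup, edgeSet_subgraphOfAdj]
      ext e; simp; tauto
    have e12 : s(a,b) ≠ s(a,c) := by
      rw [Ne, Sym2.eq_iff]; rintro (⟨h1, h2⟩ | ⟨h1, h2⟩) <;> subst_vars <;> simp_all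
    have e13 : s(a,b) ≠ s(a,d) := by
      rw [Ne, Sym2.eq_iff]; rintro (⟨h1, h2⟩ | ⟨h1, h2⟩) <;> subst_vars <;> simp_all
    have e23 : s(a,c) ≠ s(a,d) := by
      rw [Ne, Sym2.eq_iff]; rintro (⟨h1, h2⟩ | ⟨h1, h2⟩) <;> subst_vars <;> simp_all
    rw [this, Set.ncard_insert_of_notMem (by simp [e12, e13]) (Set.toFinite _),
      Set.ncard_pair e23]

lemma my_top_connected {G : SimpleGraph V} (hG : G.Connected) :
    (⊤ : G.Subgraph).Connected := by
  rw [Subgraph.connected_iff']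
  exact hG.map (Subgraph.topIso.symm : G ≃g (⊤ : G.Subgraph).coe).toHom
    (Subgraph.topIso.symm.toEquiv.surjective)

lemma my_bool_combo : ∀ ab ac ad bc bd cd : Bool,
    (ab || ac || ad) = true → (ab || bc || bd) = true → (ac || bc || cd) = true →
    (ad || bd || cd) = true → (ab || bc || cd || ad) = true →
    (ab || bd || cd || ac) = true → (ac || bc || bd || ad) = true →
    ((ab && ac && ad) ||
      (ab && bc && bd) ||
      (ac && bc && cd) ||
      (ad && bd && cd) ||
      (ab && ac && bd) ||
      (ab && ad && bc) ||
      (ac && ad && bc) ||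
      (ab && ac && cd) ||
      (ab && ad && cd) ||
      (ab && bc && cd) ||
      (ab && bd && cd) ||
      (ac && ad && bd) ||
      (ac && bc && bd) ||
      (ac && bd && cd) ||
      (ad && bc && bd) ||
      (ad && bc && cd)) = true := by decide

lemma my_combo {G : SimpleGraph V} [DecidableRel G.Adj] {a b c d : V}
    (dab : a ≠ b) (dac : a ≠ c) (dad : a ≠ d) (dbc : b ≠ c) (dbd : b ≠ d) (dcd : c ≠ d)
    (h1 : ¬(¬G.Adj a b ∧ ¬G.Adj a c ∧ ¬G.Adj a d))
    (h2 : ¬(¬G.Adj a b ∧ ¬G.Adj b c ∧ ¬G.Adj b d))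
    (h3 : ¬(¬G.Adj a c ∧ ¬G.Adj b c ∧ ¬G.Adj c d))
    (h4 : ¬(¬G.Adj a d ∧ ¬G.Adj b d ∧ ¬G.Adj c d))
    (h5 : ¬(¬G.Adj a b ∧ ¬G.Adj b c ∧ ¬G.Adj c d ∧ ¬G.Adj a d))
    (h6 : ¬(¬G.Adj a b ∧ ¬G.Adj b d ∧ ¬G.Adj c d ∧ ¬G.Adj a c))
    (h7 : ¬(¬G.Adj a c ∧ ¬G.Adj b c ∧ ¬G.Adj b d ∧ ¬G.Adj a d)) :
    ∃ H : G.Subgraph, H.Connected ∧ ({a, b, c, d} : Set V) ⊆ H.verts ∧ H.edgeSet.ncard = 3 := by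
  have B := my_bool_combo (decide (G.Adj a b)) (decide (G.Adj a c)) (decide (G.Adj a d))
    (decide (G.Adj b c)) (decide (G.Adj b d)) (decide (G.Adj c d))
    (by simp only [Bool.or_eq_true, decide_eq_true_eq]; by_contra hx; push_neg at hx; exact h1 ⟨hx.1.1, hx.1.2, hx.2⟩)
    (by simp only [Bool.or_eq_true, decide_eq_true_eq]; by_contra hx; push_neg at hx; exact h2 ⟨hx.1.1, hx.1.2, hx.2⟩)
    (by simp only [Bool.or_eq_true, decide_eq_true_eq]; by_contra hx; push_neg at hx; exact h3 ⟨hx.1.1, hx.1.2, hx.2⟩)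
    (by simp only [Bool.or_eq_true, decide_eq_true_eq]; by_contra hx; push_neg at hx; exact h4 ⟨hx.1.1, hx.1.2, hx.2⟩)
    (by simp only [Bool.or_eq_true, decide_eq_true_eq]; by_contra hx; push_neg at hx; exact h5 ⟨hx.1.1.1, hx.1.1.2, hx.1.2, hx.2⟩)
    (by simp only [Bool.or_eq_true, decide_eq_true_eq]; by_contra hx; push_neg at hx; exact h6 ⟨hx.1.1.1, hx.1.1.2, hx.1.2, hx.2⟩)
    (by simp only [Bool.or_eq_true, decide_eq_true_eq]; by_contra hx; push_neg at hx; exact h7 ⟨hx.1.1.1, hx.1.1.2, hx.1.2, hx.2⟩)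
  simp only [Bool.or_eq_true, Bool.and_eq_true, decide_eq_true_eq] at B
  rcases B with (((((((((((((((⟨⟨e1, e2⟩, e3⟩|⟨⟨e1, e2⟩, e3⟩)|⟨⟨e1, e2⟩, e3⟩)|⟨⟨e1, e2⟩, e3⟩)|⟨⟨e1, e2⟩, e3⟩)|⟨⟨e1, e2⟩, e3⟩)|⟨⟨e1, e2⟩, e3⟩)|⟨⟨e1, e2⟩, e3⟩)|⟨⟨e1, e2⟩, e3⟩)|⟨⟨e1, e2⟩, e3⟩)|⟨⟨e1, e2⟩, e3⟩)|⟨⟨e1, e2⟩, e3⟩)|⟨⟨e1, e2⟩, e3⟩)|⟨⟨e1, e2⟩, e3⟩)|⟨⟨e1, e2⟩, e3⟩)|⟨⟨e1, e2⟩, e3⟩)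
  · obtain ⟨H, hc, hv, he⟩ := my_star_exists e1 e2 e3 dbc dbd dcd
    refine ⟨H, hc, ?_, he⟩
    rw [hv]; try (intro x hx; simp only [Set.mem_insert_iff, Set.mem_singleton_iff] at hx ⊢; rcases hx with rfl|rfl|rfl|rfl <;> simp)
  · obtain ⟨H, hc, hv, he⟩ := my_star_exists e1.symm e2 e3 dac dad dcd
    refine ⟨H, hc, ?_, he⟩
    rw [hv]; try (intro x hx; simp only [Set.mem_insert_iff, Set.mem_singleton_iff] at hx ⊢; rcases hx with rfl|rfl|rfl|rfl <;> simp)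
  · obtain ⟨H, hc, hv, he⟩ := my_star_exists e1.symm e2.symm e3 dab dad dbd
    refine ⟨H, hc, ?_, he⟩
    rw [hv]; try (intro x hx; simp only [Set.mem_insert_iff, Set.mem_singleton_iff] at hx ⊢; rcases hx with rfl|rfl|rfl|rfl <;> simp)
  · obtain ⟨H, hc, hv, he⟩ := my_star_exists e1.symm e2.symm e3.symm dab dac dbc
    refine ⟨H, hc, ?_, he⟩
    rw [hv]; try (intro x hx; simp only [Set.mem_insert_iff, Set.mem_singleton_iff] at hx ⊢; rcases hx with rfl|rfl|rfl|rfl <;> simp)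
  · obtain ⟨H, hc, hv, he⟩ := my_tree_exists e2.symm e1 e3 dbc.symm dcd dad
    refine ⟨H, hc, ?_, he⟩
    rw [hv]; try (intro x hx; simp only [Set.mem_insert_iff, Set.mem_singleton_iff] at hx ⊢; rcases hx with rfl|rfl|rfl|rfl <;> simp)
  · obtain ⟨H, hc, hv, he⟩ := my_tree_exists e2.symm e1 e3 dbd.symm dcd.symm dac
    refine ⟨H, hc, ?_, he⟩
    rw [hv]; try (intro x hx; simp only [Set.mem_insert_iff, Set.mem_singleton_iff] at hx ⊢; rcases hx with rfl|rfl|rfl|rfl <;> simp)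
  · obtain ⟨H, hc, hv, he⟩ := my_tree_exists e2.symm e1 e3.symm dcd.symm dbd.symm dab
    refine ⟨H, hc, ?_, he⟩
    rw [hv]; try (intro x hx; simp only [Set.mem_insert_iff, Set.mem_singleton_iff] at hx ⊢; rcases hx with rfl|rfl|rfl|rfl <;> simp)
  · obtain ⟨H, hc, hv, he⟩ := my_tree_exists e1.symm e2 e3 dbc dbd dad
    refine ⟨H, hc, ?_, he⟩
    rw [hv]; try (intro x hx; simp only [Set.mem_insert_iff, Set.mem_singleton_iff] at hx ⊢; rcases hx with rfl|rfl|rfl|rfl <;> simp)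
  · obtain ⟨H, hc, hv, he⟩ := my_tree_exists e1.symm e2 e3.symm dbd dbc dac
    refine ⟨H, hc, ?_, he⟩
    rw [hv]; try (intro x hx; simp only [Set.mem_insert_iff, Set.mem_singleton_iff] at hx ⊢; rcases hx with rfl|rfl|rfl|rfl <;> simp)
  · obtain ⟨H, hc, hv, he⟩ := my_tree_exists e1 e2 e3 dac dad dbd
    refine ⟨H, hc, ?_, he⟩
    rw [hv]; try (intro x hx; simp only [Set.mem_insert_iff, Set.mem_singleton_iff] at hx ⊢; rcases hx with rfl|rfl|rfl|rfl <;> simp)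
  · obtain ⟨H, hc, hv, he⟩ := my_tree_exists e1 e2 e3.symm dad dac dbc
    refine ⟨H, hc, ?_, he⟩
    rw [hv]; try (intro x hx; simp only [Set.mem_insert_iff, Set.mem_singleton_iff] at hx ⊢; rcases hx with rfl|rfl|rfl|rfl <;> simp)
  · obtain ⟨H, hc, hv, he⟩ := my_tree_exists e1.symm e2 e3.symm dcd dbc.symm dab
    refine ⟨H, hc, ?_, he⟩
    rw [hv]; try (intro x hx; simp only [Set.mem_insert_iff, Set.mem_singleton_iff] at hx ⊢; rcases hx with rfl|rfl|rfl|rfl <;> simp)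
  · obtain ⟨H, hc, hv, he⟩ := my_tree_exists e1 e2.symm e3 dab dad dcd
    refine ⟨H, hc, ?_, he⟩
    rw [hv]; try (intro x hx; simp only [Set.mem_insert_iff, Set.mem_singleton_iff] at hx ⊢; rcases hx with rfl|rfl|rfl|rfl <;> simp)
  · obtain ⟨H, hc, hv, he⟩ := my_tree_exists e1 e3 e2.symm dad dab dbc.symm
    refine ⟨H, hc, ?_, he⟩
    rw [hv]; try (intro x hx; simp only [Set.mem_insert_iff, Set.mem_singleton_iff] at hx ⊢; rcases hx with rfl|rfl|rfl|rfl <;> simp)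
  · obtain ⟨H, hc, hv, he⟩ := my_tree_exists e1 e3.symm e2 dab dac dcd.symm
    refine ⟨H, hc, ?_, he⟩
    rw [hv]; try (intro x hx; simp only [Set.mem_insert_iff, Set.mem_singleton_iff] at hx ⊢; rcases hx with rfl|rfl|rfl|rfl <;> simp)
  · obtain ⟨H, hc, hv, he⟩ := my_tree_exists e1 e3.symm e2.symm dac dab dbd.symm
    refine ⟨H, hc, ?_, he⟩
    rw [hv]; try (intro x hx; simp only [Set.mem_insert_iff, Set.mem_singleton_iff] at hx ⊢; rcases hx with rfl|rfl|rfl|rfl <;> simp)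

lemma my_steiner_nonempty [Fintype V] {G : SimpleGraph V} (hG : G.Connected) (S : Finset V) :
    {m | ∃ H : G.Subgraph, H.Connected ∧ ↑S ⊆ H.verts ∧ H.edgeSet.ncard = m}.Nonempty :=
  ⟨_, ⊤, my_top_connected hG, by simp, rfl⟩

lemma my_steinerDist_le [Fintype V] {G : SimpleGraph V} {S : Finset V} {H : G.Subgraph}
    (hH : H.Connected) (hsub : ↑S ⊆ H.verts) : steinerDist G S ≤ H.edgeSet.ncard :=
  Nat.sInf_le ⟨H, hH, hsub, rfl⟩

lemma my_le_steinerDist [Fintype V] {G : SimpleGraph V} (hG : G.Connected) {S : Finset V} {k : ℕ}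
    (h : ∀ H : G.Subgraph, H.Connected → ↑S ⊆ H.verts → k ≤ H.edgeSet.ncard) :
    k ≤ steinerDist G S := by
  obtain ⟨H, h1, h2, h3⟩ := Nat.sInf_mem (my_steiner_nonempty hG S)
  rw [steinerDist]
  exact h3 ▸ h H h1 h2

lemma my_verts_ge [Fintype V] {G : SimpleGraph V} {H : G.Subgraph} {S : Finset V}
    (hsub : ↑S ⊆ H.verts) : S.card ≤ H.verts.ncard := by
  rw [← Set.ncard_coe_finset]
  exact Set.ncard_le_ncard hsub (Set.toFinite _)

lemma my_three_le [Fintype V] {G : SimpleGraph V} (hG : G.Connected) {S : Finset V}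
    (hS : S.card = 4) : 3 ≤ steinerDist G S := by
  apply my_le_steinerDist hG
  intro H h1 h2
  have hv := my_subgraph_verts_le H h1
  have hg := my_verts_ge h2
  omega

lemma my_subgraph_neighbor {G : SimpleGraph V} {H : G.Subgraph} (h1 : H.Connected) {v x : V}
    (hv : v ∈ H.verts) (hx : x ∈ H.verts) (hne : v ≠ x) :
    ∃ u, H.Adj v u ∧ u ∈ H.verts := by
  obtain ⟨u, hu, -⟩ := my_exists_closer H.coe (h1.coe ⟨v, hv⟩ ⟨x, hx⟩)
    (fun h => hne (congrArg Subtype.val h))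
  exact ⟨(u : V), hu, u.2⟩

lemma my_card_four {W : Type*} [DecidableEq W] {S : Finset W} (h : S.card = 4) :
    ∃ a b c d : W, a ≠ b ∧ a ≠ c ∧ a ≠ d ∧ b ≠ c ∧ b ≠ d ∧ c ≠ d ∧
      S = {a, b, c, d} := by
  classical
  obtain ⟨a, t, hat, rfl, ht⟩ := Finset.card_eq_succ.mp h
  obtain ⟨b, c, d, hbc, hbd, hcd, rfl⟩ := Finset.card_eq_three.mp ht
  simp only [Finset.mem_insert, Finset.mem_singleton, not_or] at hat
  exact ⟨a, b, c, d, hat.1, hat.2.1, hat.2.2, hbc, hbd, hcd, rfl⟩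

theorem stmt_7 [Fintype V] (G : SimpleGraph V) [DecidableRel G.Adj]
    (hn : 5 ≤ Fintype.card V) (hG : G.Connected) :
    sdiam G 4 = 3 ↔
      (Fintype.card V - 3 ≤ G.minDegree ∧
        ¬ ∃ u₁ u₂ u₃ u₄ : V, u₁ ≠ u₂ ∧ u₁ ≠ u₃ ∧ u₁ ≠ u₄ ∧ u₂ ≠ u₃ ∧ u₂ ≠ u₄ ∧ u₃ ≠ u₄ ∧
          ¬ G.Adj u₁ u₂ ∧ ¬ G.Adj u₂ u₃ ∧ ¬ G.Adj u₃ u₄ ∧ ¬ G.Adj u₄ u₁) := by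
  classical
  have hn4 : (4 : ℕ) ≤ (Finset.univ : Finset V).card := by
    rw [Finset.card_univ]; omega
  constructor
  · intro hsd
    constructor
    · -- min degree bound
      by_contra hlt
      push_neg at hlt
      have : Nonempty V := Fintype.card_pos_iff.mp (by omega)
      obtain ⟨v, hv⟩ := G.exists_minimal_degree_vertex
      have hdeg : G.degree v ≤ Fintype.card V - 4 := by omega
      set T : Finset V := Finset.univ \ insert v (G.neighborFinset v) with hT
      have hTcard : 3 ≤ T.card := by
        rw [hT, Finset.card_sdiff_of_subset (Finset.subset_univ _),
          Finset.card_insert_of_notMem (G.notMem_neighborFinset_self v),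
          Finset.card_univ, G.card_neighborFinset_eq_degree]
        omega
      obtain ⟨t, htT, htc⟩ := Finset.exists_subset_card_eq hTcard
      obtain ⟨x, y, z, hxy, hxz, hyz, rfl⟩ := Finset.card_eq_three.mp htc
      have hmem : ∀ w ∈ ({x, y, z} : Finset V), w ≠ v ∧ ¬ G.Adj v w := by
        intro w hw
        have := htT hw
        rw [hT, Finset.mem_sdiff, Finset.mem_insert] at this
        push_neg at this
        exact ⟨this.2.1, fun h => this.2.2 ((G.mem_neighborFinset v w).mpr h)⟩
      obtain ⟨hxv, hvx⟩ := hmem x (by simp)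
      obtain ⟨hyv, hvy⟩ := hmem y (by simp)
      obtain ⟨hzv, hvz⟩ := hmem z (by simp)
      set S : Finset V := insert v {x, y, z} with hS
      have hScard : S.card = 4 := by
        rw [hS, Finset.card_insert_of_notMem (by simp [hxv.symm, hyv.symm, hzv.symm]), htc]
      have hge : 4 ≤ steinerDist G S := by
        apply my_le_steinerDist hG
        intro H h1 h2
        have hvH : v ∈ H.verts := h2 (by simp [hS])
        have hxH : x ∈ H.verts := h2 (by simp [hS])
        obtain ⟨u, huAdj, huH⟩ := my_subgraph_neighbor h1 hvH hxH (Ne.symm hxv)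
        have huv : u ≠ v := huAdj.ne.symm
        have hux : u ≠ x := fun h => hvx (h ▸ H.adj_sub huAdj)
        have huy : u ≠ y := fun h => hvy (h ▸ H.adj_sub huAdj)
        have huz : u ≠ z := fun h => hvz (h ▸ H.adj_sub huAdj)
        have h5 : (insert u S).card = 5 := by
          rw [Finset.card_insert_of_notMem (by simp [hS, huv, hux, huy, huz]), hScard]
        have hsub5 : ↑(insert u S) ⊆ H.verts := by
          rw [Finset.coe_insert]
          exact Set.insert_subset huH h2
        have := my_verts_ge hsub5
        have := my_subgraph_verts_le H h1
        omega
      have hle : steinerDist G S ≤ 3 := by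
        rw [← hsd, sdiam]
        exact Finset.le_sup (Finset.mem_powersetCard.mpr ⟨Finset.subset_univ _, hScard⟩)
      omega
    · -- no C4 in complement
      rintro ⟨a, b, c, d, h12, h13, h14, h23, h24, h34, hA, hB, hC, hD⟩
      have hA' : ¬ G.Adj b a := fun h => hA h.symm
      have hB' : ¬ G.Adj c b := fun h => hB h.symm
      have hC' : ¬ G.Adj d c := fun h => hC h.symm
      have hD' : ¬ G.Adj a d := fun h => hD h.symm
      set S : Finset V := {a, b, c, d} with hS
      have hScard : S.card = 4 := by
        rw [hS, Finset.card_insert_of_notMem (by simp [h12, h13, h14]),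
          Finset.card_insert_of_notMem (by simp [h23, h24]),
          Finset.card_insert_of_notMem (by simp [h34]), Finset.card_singleton]
      have hge : 4 ≤ steinerDist G S := by
        apply my_le_steinerDist hG
        intro H h1 h2
        have h3 := my_subgraph_verts_le H h1
        have h4 := my_verts_ge h2
        by_cases h5 : 5 ≤ H.verts.ncard
        · omega
        · exfalso
          have hVeq : (↑S : Set V) = H.verts := by
            apply Set.eq_of_subset_of_ncard_le h2 _ (Set.toFinite _)
            rw [Set.ncard_coe_finset, hScard]
            omega
          have hsub2 : H.edgeSet ⊆ {s(a, c), s(b, d)} := by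
            intro e he
            induction e using Sym2.ind with
            | _ x y =>
              have hadj : H.Adj x y := he
              have hxS : x ∈ H.verts := H.edge_vert hadj
              have hyS : y ∈ H.verts := H.edge_vert hadj.symm
              rw [← hVeq, hS] at hxS hyS
              have hG' : G.Adj x y := H.adj_sub hadj
              have hne : x ≠ y := G.ne_of_adj hG'
              simp only [Finset.coe_insert, Finset.coe_singleton, Set.mem_insert_iff,
                Set.mem_singleton_iff] at hxS hyS
              simp only [Set.mem_insert_iff, Set.mem_singleton_iff, Sym2.eq_iff]
              rcases hxS with rfl | rfl | rfl | rfl <;> rcases hyS with rfl | rfl | rfl | rfl <;>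
                first
                  | (exact absurd hG' hA) | (exact absurd hG' hA')
                  | (exact absurd hG' hB) | (exact absurd hG' hB')
                  | (exact absurd hG' hC) | (exact absurd hG' hC')
                  | (exact absurd hG' hD) | (exact absurd hG' hD')
                  | (exact absurd rfl hne) | simp
          have hle2 : H.edgeSet.ncard ≤ 2 := by
            refine le_trans (Set.ncard_le_ncard hsub2 (Set.toFinite _)) ?_
            refine le_trans (Set.ncard_insert_le _ _) ?_
            simp
          rw [hScard] at h4
          omega
      have hle : steinerDist G S ≤ 3 := by
        rw [← hsd, sdiam]
        exact Finset.le_sup (Finset.mem_powersetCard.mpr ⟨Finset.subset_univ _, hScard⟩)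
      omega
  · rintro ⟨hδ, hC4⟩
    have nodeg : ∀ v x y z : V, v ≠ x → v ≠ y → v ≠ z → x ≠ y → x ≠ z → y ≠ z →
        ¬(¬G.Adj v x ∧ ¬G.Adj v y ∧ ¬G.Adj v z) := by
      rintro v x y z hvx hvy hvz hxy hxz hyz ⟨h1, h2, h3⟩
      have hsub : G.neighborFinset v ⊆ Finset.univ \ ({v, x, y, z} : Finset V) := by
        intro u hu
        rw [G.mem_neighborFinset] at hu
        simp only [Finset.mem_sdiff, Finset.mem_univ, true_and, Finset.mem_insert,
          Finset.mem_singleton]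
        push_neg
        exact ⟨hu.ne',
          fun h => h1 (h ▸ hu), fun h => h2 (h ▸ hu), fun h => h3 (h ▸ hu)⟩
      have hc4 : ({v, x, y, z} : Finset V).card = 4 := by
        rw [Finset.card_insert_of_notMem (by simp [hvx, hvy, hvz]),
          Finset.card_insert_of_notMem (by simp [hxy, hxz]),
          Finset.card_insert_of_notMem (by simp [hyz]), Finset.card_singleton]
      have hdle := Finset.card_le_card hsub
      rw [Finset.card_sdiff_of_subset (Finset.subset_univ _), Finset.card_univ, hc4,
        G.card_neighborFinset_eq_degree] at hdle
      have := G.minDegree_le_degree v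
      omega
    apply le_antisymm
    · apply Finset.sup_le
      intro S hS
      have hc : S.card = 4 := (Finset.mem_powersetCard.mp hS).2
      obtain ⟨a, b, c, d, dab, dac, dad, dbc, dbd, dcd, rfl⟩ := my_card_four hc
      have k1 := nodeg a b c d dab dac dad dbc dbd dcd
      have k2 : ¬(¬G.Adj a b ∧ ¬G.Adj b c ∧ ¬G.Adj b d) := by
        rintro ⟨p, q, r⟩
        exact nodeg b a c d dab.symm dbc dbd dac dad dcd ⟨fun h => p h.symm, q, r⟩
      have k3 : ¬(¬G.Adj a c ∧ ¬G.Adj b c ∧ ¬G.Adj c d) := by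
        rintro ⟨p, q, r⟩
        exact nodeg c a b d dac.symm dbc.symm dcd dab dad dbd
          ⟨fun h => p h.symm, fun h => q h.symm, r⟩
      have k4 : ¬(¬G.Adj a d ∧ ¬G.Adj b d ∧ ¬G.Adj c d) := by
        rintro ⟨p, q, r⟩
        exact nodeg d a b c dad.symm dbd.symm dcd.symm dab dac dbc
          ⟨fun h => p h.symm, fun h => q h.symm, fun h => r h.symm⟩
      have k5 : ¬(¬G.Adj a b ∧ ¬G.Adj b c ∧ ¬G.Adj c d ∧ ¬G.Adj a d) := by
        rintro ⟨p, q, r, s⟩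
        exact hC4 ⟨a, b, c, d, dab, dac, dad, dbc, dbd, dcd, p, q, r, fun h => s h.symm⟩
      have k6 : ¬(¬G.Adj a b ∧ ¬G.Adj b d ∧ ¬G.Adj c d ∧ ¬G.Adj a c) := by
        rintro ⟨p, q, r, s⟩
        exact hC4 ⟨a, b, d, c, dab, dad, dac, dbd, dbc, dcd.symm, p, q,
          fun h => r h.symm, fun h => s h.symm⟩
      have k7 : ¬(¬G.Adj a c ∧ ¬G.Adj b c ∧ ¬G.Adj b d ∧ ¬G.Adj a d) := by
        rintro ⟨p, q, r, s⟩
        exact hC4 ⟨a, c, b, d, dac, dab, dad, dbc.symm, dcd, dbd, p,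
          fun h => q h.symm, r, fun h => s h.symm⟩
      obtain ⟨H, hc', hsub, he⟩ := my_combo dab dac dad dbc dbd dcd k1 k2 k3 k4 k5 k6 k7
      have : steinerDist G {a, b, c, d} ≤ H.edgeSet.ncard :=
        my_steinerDist_le hc' (by simpa using hsub)
      omega
    · obtain ⟨S₀, hsub₀, hcard₀⟩ := Finset.exists_subset_card_eq hn4
      exact le_trans (my_three_le hG hcard₀)
        (Finset.le_sup (Finset.mem_powersetCard.mpr ⟨hsub₀, hcard₀⟩))
end

section
/- Let G be a connected simple graph on n ≥ 5 vertices with minimum degree δ(G) = n-3, and let S = {u,v,w,z} be a 4-subset of vertices such that G[S] is isomorphic to the disjoint union of two edges (2K_2). Then d_G(S) = 4. -/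
open SimpleGraph

variable {V : Type*}

lemma aux_card_le {W : Type*} [Fintype W] {G : SimpleGraph W}
    (hG : G.Connected) : Fintype.card W ≤ G.edgeSet.ncard + 1 := by
  classical
  obtain ⟨a⟩ := hG.nonempty
  choose f hf using fun b : W => (hG b a).exists_walk_length_eq_dist
  set g : W → Sym2 W := fun b =>
    if h : b = a then s(a, a) else ((f b).firstDart (Walk.not_nil_of_ne h)).edge with hg
  have hdist : ∀ b, b ≠ a → G.dist ((f b).getVert 1) a < G.dist b a := by
    intro b hb
    have hnil : ¬ (f b).Nil := Walk.not_nil_of_ne hb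
    have h1 : G.dist ((f b).getVert 1) a ≤ _ := SimpleGraph.dist_le ((f b).tail)
    have hlen := Walk.length_tail_add_one hnil
    have hpos := hG.pos_dist_of_ne hb
    have := hf b
    omega
  have hmaps : ∀ b ∈ (Finset.univ : Finset W).erase a, g b ∈ G.edgeFinset := by
    intro b hb
    have hb' : b ≠ a := (Finset.mem_erase.mp hb).1
    simp only [hg, dif_neg hb', mem_edgeFinset]
    exact Dart.edge_mem _
  have hinj : Set.InjOn g ((Finset.univ : Finset W).erase a) := by
    intro b hb b' hb' heq
    have hb1 : b ≠ a := (Finset.mem_erase.mp hb).1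
    have hb2 : b' ≠ a := (Finset.mem_erase.mp hb').1
    by_contra hne
    simp only [hg, dif_neg hb1, dif_neg hb2, Walk.edge_firstDart] at heq
    rw [Sym2.eq_iff] at heq
    rcases heq with ⟨h, _⟩ | ⟨h, h'⟩
    · exact hne h
    · have d1 := hdist b hb1
      have d2 := hdist b' hb2
      rw [show (f b).getVert 1 = b' from h'] at d1
      rw [← show b = (f b').getVert 1 from h] at d2
      omega
  have hcard := Finset.card_le_card_of_injOn g hmaps hinj
  rw [Finset.card_erase_of_mem (Finset.mem_univ a), Finset.card_univ] at hcard
  rw [Set.ncard_eq_toFinset_card' G.edgeSet]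
  have hp : (0:ℕ) < Fintype.card W := @Fintype.card_pos _ _ ⟨a⟩
  have : G.edgeSet.toFinset.card = G.edgeFinset.card := rfl
  omega

theorem stmt_10 [Fintype V] [DecidableEq V] (G : SimpleGraph V) [DecidableRel G.Adj]
    (hn : 5 ≤ Fintype.card V) (hG : G.Connected)
    (hδ : G.minDegree = Fintype.card V - 3)
    (u v w z : V) (huv : u ≠ v) (huw : u ≠ w) (huz : u ≠ z)
    (hvw : v ≠ w) (hvz : v ≠ z) (hwz : w ≠ z)
    (h1 : G.Adj u v) (h2 : G.Adj w z)
    (h3 : ¬ G.Adj u w) (h4 : ¬ G.Adj u z) (h5 : ¬ G.Adj v w) (h6 : ¬ G.Adj v z) :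
    steinerDist G {u, v, w, z} = 4 := by
  classical
  have adj_all : ∀ a b c : V, a ≠ b → a ≠ c → b ≠ c → (¬ G.Adj a b) → (¬ G.Adj a c) →
      ∀ y, y ≠ a → y ≠ b → y ≠ c → G.Adj a y := by
    intro a b c hab hac hbc hnb hnc y hya hyb hyc
    have hsub : G.neighborFinset a ⊆ Finset.univ \ {a, b, c} := by
      intro t ht
      rw [mem_neighborFinset] at ht
      simp only [Finset.mem_sdiff, Finset.mem_univ, true_and, Finset.mem_insert,
        Finset.mem_singleton]
      push_neg
      exact ⟨fun h => G.irrefl (h ▸ ht), fun h => hnb (h ▸ ht), fun h => hnc (h ▸ ht)⟩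
    have hcard : (Finset.univ \ ({a,b,c} : Finset V)).card = Fintype.card V - 3 := by
      rw [Finset.card_sdiff_of_subset (Finset.subset_univ _), Finset.card_univ]
      congr 1
      rw [Finset.card_insert_of_notMem (by simp [hab, hac]),
        Finset.card_insert_of_notMem (by simp [hbc]), Finset.card_singleton]
    have hdeg : Fintype.card V - 3 ≤ (G.neighborFinset a).card := by
      have := G.minDegree_le_degree a
      rw [hδ] at this
      exact this
    have heq := Finset.eq_of_subset_of_card_le hsub (by rw [hcard]; exact hdeg)
    have hy : y ∈ Finset.univ \ ({a,b,c} : Finset V) := by simp [hya, hyb, hyc]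
    rw [← heq, mem_neighborFinset] at hy
    exact hy
  show sInf {m | ∃ H : G.Subgraph, H.Connected ∧ ↑({u,v,w,z} : Finset V) ⊆ H.verts ∧ H.edgeSet.ncard = m} = 4
  classical
  -- existence of an outside vertex x
  obtain ⟨x, hx⟩ : ∃ x : V, x ∉ ({u, v, w, z} : Finset V) := by
    by_contra hc
    push_neg at hc
    have : (Finset.univ : Finset V) ⊆ {u, v, w, z} := fun t _ => hc t
    have := Finset.card_le_card this
    rw [Finset.card_univ] at this
    have h4 : ({u, v, w, z} : Finset V).card ≤ 4 := by
      apply le_trans (Finset.card_insert_le _ _)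
      apply Nat.succ_le_succ
      apply le_trans (Finset.card_insert_le _ _)
      apply Nat.succ_le_succ
      apply le_trans (Finset.card_insert_le _ _)
      simp
    omega
  simp only [Finset.mem_insert, Finset.mem_singleton, not_or] at hx
  obtain ⟨hxu, hxv, hxw, hxz⟩ := hx
  have hux : G.Adj u x := adj_all u w z huw huz hwz h3 h4 x hxu hxw hxz
  have hwx' : G.Adj w x := adj_all w u v (Ne.symm huw) (Ne.symm hvw) huv
    (fun h => h3 h.symm) (fun h => h5 h.symm) x hxw hxu hxv
  have hwx : G.Adj x w := hwx'.symm
  -- the witness subgraph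
  set H : G.Subgraph := (G.subgraphOfAdj h1 ⊔ G.subgraphOfAdj hux) ⊔
      (G.subgraphOfAdj hwx ⊔ G.subgraphOfAdj h2) with hH
  have hconn : H.Connected := by
    apply Subgraph.connected_sup
    · exact (Subgraph.connected_sup (Subgraph.subgraphOfAdj_connected h1).preconnected (Subgraph.subgraphOfAdj_connected hux).preconnected ⟨u, by simp⟩).preconnected
    · exact (Subgraph.connected_sup (Subgraph.subgraphOfAdj_connected hwx).preconnected (Subgraph.subgraphOfAdj_connected h2).preconnected ⟨w, by simp⟩).preconnected
    · exact ⟨x, by simp⟩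
  have hverts : ↑({u,v,w,z} : Finset V) ⊆ H.verts := by
    intro t ht
    simp only [Finset.coe_insert, Finset.coe_singleton, Set.mem_insert_iff,
      Set.mem_singleton_iff] at ht
    rcases ht with rfl|rfl|rfl|rfl <;> simp [hH]
  have hedges : H.edgeSet = {s(u,v), s(u,x), s(x,w), s(w,z)} := by
    simp only [hH, Subgraph.edgeSet_sup, edgeSet_subgraphOfAdj]
    ext e
    simp only [Set.mem_union, Set.mem_singleton_iff, Set.mem_insert_iff]
    tauto
  have hcard4 : H.edgeSet.ncard = 4 := by
    rw [hedges]
    rw [Set.ncard_insert_of_notMem (by simp [Sym2.eq_iff]; tauto) (Set.toFinite _),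
      Set.ncard_insert_of_notMem (by simp [Sym2.eq_iff]; tauto) (Set.toFinite _),
      Set.ncard_insert_of_notMem (by simp [Sym2.eq_iff]; tauto) (Set.toFinite _),
      Set.ncard_singleton]
  have hmem : 4 ∈ {m | ∃ H : G.Subgraph, H.Connected ∧ ↑({u,v,w,z} : Finset V) ⊆ H.verts ∧ H.edgeSet.ncard = m} :=
    ⟨H, hconn, hverts, hcard4⟩
  -- lower bound
  have hlb : ∀ m ∈ {m | ∃ H : G.Subgraph, H.Connected ∧ ↑({u,v,w,z} : Finset V) ⊆ H.verts ∧ H.edgeSet.ncard = m}, 4 ≤ m := by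
    rintro m ⟨K, hKc, hKv, rfl⟩
    haveI : Fintype ↥K.verts := (Set.toFinite K.verts).fintype
    have hvcard : K.verts.ncard = Fintype.card ↥K.verts := by
      rw [Set.ncard_eq_toFinset_card', Set.toFinset_card]
    have hcoe := aux_card_le hKc.coe
    have hE : K.coe.edgeSet.ncard = K.edgeSet.ncard := by
      rw [← Subgraph.image_coe_edgeSet_coe]
      exact (Set.ncard_image_of_injective _ (Sym2.map.injective Subtype.val_injective)).symm
    rw [hE] at hcoe
    have hSsub : ({u,v,w,z} : Set V) ⊆ K.verts := by
      simpa using hKv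
    have hS4 : ({u,v,w,z} : Set V).ncard = 4 := by
      rw [Set.ncard_insert_of_notMem (by simp [huv, huw, huz]) (Set.toFinite _),
        Set.ncard_insert_of_notMem (by simp [hvw, hvz]) (Set.toFinite _),
        Set.ncard_insert_of_notMem (by simp [hwz]) (Set.toFinite _),
        Set.ncard_singleton]
    have h4le : 4 ≤ K.verts.ncard := hS4 ▸ Set.ncard_le_ncard hSsub (Set.toFinite _)
    by_contra hlt
    push_neg at hlt
    have hm3 : K.edgeSet.ncard = 3 := by omega
    have hveq : K.verts = {u,v,w,z} := by
      symm
      apply Set.eq_of_subset_of_ncard_le hSsub _ (Set.toFinite _)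
      omega
    have h3' : ¬ G.Adj w u := fun h => h3 h.symm
    have h4' : ¬ G.Adj z u := fun h => h4 h.symm
    have h5' : ¬ G.Adj w v := fun h => h5 h.symm
    have h6' : ¬ G.Adj z v := fun h => h6 h.symm
    have hesub : K.edgeSet ⊆ {s(u,v), s(w,z)} := by
      intro e he
      induction e with
      | _ a b =>
        rw [Subgraph.mem_edgeSet] at he
        have ha := K.edge_vert he
        have hb := K.edge_vert he.symm
        have hg := K.adj_sub he
        rw [hveq] at ha hb
        simp only [Set.mem_insert_iff, Set.mem_singleton_iff] at ha hb ⊢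
        rcases ha with rfl|rfl|rfl|rfl <;> rcases hb with rfl|rfl|rfl|rfl <;>
          first
          | exact absurd hg (G.irrefl)
          | exact absurd hg h3 | exact absurd hg h4 | exact absurd hg h5 | exact absurd hg h6
          | exact absurd hg h3' | exact absurd hg h4' | exact absurd hg h5' | exact absurd hg h6'
          | simp [Sym2.eq_iff]
    have hle2 : K.edgeSet.ncard ≤ 2 := by
      apply le_trans (Set.ncard_le_ncard hesub (Set.toFinite _))
      apply le_trans (Set.ncard_insert_le _ _)
      simp
    omega
  exact le_antisymm (Nat.sInf_le hmem) (le_csInf ⟨4, hmem⟩ hlb)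
end

section
/- Let G be a connected simple graph on n ≥ 3 vertices containing a cycle of length c. Then G has at least c non-cut vertices. -/
open SimpleGraph

variable {V : Type*}

namespace StmtAux

variable {G : SimpleGraph V}

/-- Reachability by a walk avoiding the vertex `v`. -/
def AReach (G : SimpleGraph V) (v x y : V) : Prop :=
  ∃ p : G.Walk x y, v ∉ p.support

lemma AReach.refl {v x : V} (h : x ≠ v) : AReach G v x x :=
  ⟨Walk.nil, by simp [Ne.symm h]⟩

lemma AReach.symm {v x y : V} (h : AReach G v x y) : AReach G v y x := by
  obtain ⟨p, hp⟩ := h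
  exact ⟨p.reverse, by simpa using hp⟩

lemma AReach.trans {v x y z : V} (h : AReach G v x y) (h' : AReach G v y z) :
    AReach G v x z := by
  obtain ⟨p, hp⟩ := h
  obtain ⟨q, hq⟩ := h'
  refine ⟨p.append q, ?_⟩
  rw [Walk.support_append]
  intro hc
  rcases List.mem_append.mp hc with h1 | h2
  · exact hp h1
  · exact hq (List.mem_of_mem_tail h2)

lemma reachable_induce_of_walk {s : Set V} {x y : V} (p : G.Walk x y)
    (hs : ∀ z ∈ p.support, z ∈ s) :
    (G.induce s).Reachable ⟨x, hs x p.start_mem_support⟩ ⟨y, hs y p.end_mem_support⟩ := by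
  induction p with
  | nil => exact Reachable.refl _
  | @cons a b c hab q ih =>
    have hb : ∀ z ∈ q.support, z ∈ s := fun z hz => hs z (by simp [hz])
    have hadj : (G.induce s).Adj ⟨a, hs a (by simp)⟩ ⟨b, hb b q.start_mem_support⟩ := hab
    exact hadj.reachable.trans (ih hb)

lemma aReach_of_reachable_induce {v x y : V} (hx : x ≠ v) (hy : y ≠ v)
    (h : (G.induce ({v}ᶜ : Set V)).Reachable ⟨x, hx⟩ ⟨y, hy⟩) : AReach G v x y := by
  obtain ⟨p⟩ := h
  refine ⟨p.map (Embedding.induce ({v}ᶜ : Set V)).toHom, ?_⟩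
  erw [Walk.support_map]
  intro hc
  obtain ⟨z, _, hz2⟩ := List.mem_map.mp hc
  exact z.2 hz2

lemma mem_noncut_iff {v : V} (hne : ∃ x : V, x ≠ v) :
    v ∈ noncutVerts G ↔ ∀ x y : V, x ≠ v → y ≠ v → AReach G v x y := by
  constructor
  · intro h x y hx hy
    exact aReach_of_reachable_induce hx hy (h.preconnected ⟨x, hx⟩ ⟨y, hy⟩)
  · intro h
    obtain ⟨x0, hx0⟩ := hne
    haveI : Nonempty ({v}ᶜ : Set V) := ⟨⟨x0, hx0⟩⟩
    refine ⟨fun a b => ?_⟩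
    obtain ⟨p, hp⟩ := h a b a.2 b.2
    have := reachable_induce_of_walk (s := ({v}ᶜ : Set V)) p
      (fun z hz => by simp; rintro rfl; exact hp hz)
    exact this

/-- If a walk has nodup support, its endpoint is not in `takeUntil` at an
intermediate vertex. -/
lemma end_not_mem_takeUntil [DecidableEq V] {a b m : V} (p : G.Walk a b) (hp : p.support.Nodup)
    (hm : m ∈ p.support) (hbm : b ≠ m) : b ∉ (p.takeUntil m hm).support := by
  intro hb
  have hsplit : p.support = (p.takeUntil m hm).support ++ (p.dropUntil m hm).support.tail := by
    conv_lhs => rw [← p.take_spec hm]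
    rw [Walk.support_append]
  rw [hsplit] at hp
  have hb2 : b ∈ (p.dropUntil m hm).support.tail := by
    have hmem : b ∈ (p.dropUntil m hm).support := Walk.end_mem_support _
    rw [Walk.support_eq_cons] at hmem
    rcases List.mem_cons.mp hmem with h | h
    · exact absurd h hbm
    · exact h
  exact (List.disjoint_of_nodup_append hp) hb hb2

/-- Any two vertices of a cycle distinct from `v` are connected avoiding `v`. -/
lemma cycle_aReach [DecidableEq V] {u v : V} (W : G.Walk u u) (hW : W.IsCycle) (hv : v ∈ W.support)
    {t t' : V} (ht : t ∈ W.support) (ht' : t' ∈ W.support) (htv : t ≠ v) (ht'v : t' ≠ v) :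
    AReach G v t t' := by
  set W' := W.rotate v hv with hW'def
  have hW' : W'.IsCycle := hW.rotate hv
  obtain ⟨s0, hadj0, q0, hq0⟩ := Walk.not_nil_iff.mp hW.not_nil
  have htail0 : W.support.tail = q0.support := by rw [hq0]; simp
  have hmem_tail : ∀ z, z ∈ W.support → z ∈ W.support.tail := by
    intro z hz
    rcases List.mem_cons.mp ((W.support_eq_cons) ▸ hz) with h | h
    · subst h
      exact htail0 ▸ q0.end_mem_support
    · exact h
  have hrot := W.support_rotate v hv
  obtain ⟨s, hadj, q, hq⟩ := Walk.not_nil_iff.mp hW'.not_nil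
  have hqsupp : q.support = W'.support.tail := by rw [hq]; simp
  have hqnodup : q.support.Nodup := hqsupp ▸ hW'.support_nodup
  have hmemq : ∀ z, z ∈ W.support → z ≠ v → z ∈ q.support := by
    intro z hz _
    have : z ∈ W'.support.tail := hrot.mem_iff.mpr (hmem_tail z hz)
    exact hqsupp ▸ this
  have key : ∀ z (hz : z ∈ q.support), z ≠ v → AReach G v s z := by
    intro z hz hzv
    exact ⟨q.takeUntil z hz, end_not_mem_takeUntil q hqnodup hz (Ne.symm hzv)⟩
  exact ((key t (hmemq t ht htv) htv).symm).trans (key t' (hmemq t' ht' ht'v) ht'v)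

/-- A farthest vertex from `v` within a "branch" of `G - v` is a non-cut vertex. -/
lemma farthest_noncut [Fintype V] [DecidableEq V] (hG : G.Connected) (hcard : 3 ≤ Fintype.card V)
    {v t w : V} (hwv : w ≠ v) (hwt : ¬ AReach G v w t)
    (hmax : ∀ x, x ≠ v → ¬ AReach G v x t → G.dist v x ≤ G.dist v w) :
    w ∈ noncutVerts G := by
  have key : ∀ x, x ≠ w → AReach G w v x := by
    intro x hxw
    obtain ⟨p, hp, hplen⟩ := hG.exists_path_of_dist v x
    by_cases hwmem : w ∈ p.support
    · exfalso
      have h1 : G.dist v w ≤ (p.takeUntil w hwmem).length := G.dist_le _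
      have h2 : (p.dropUntil w hwmem).length ≠ 0 := by
        intro h0
        exact hxw (Walk.eq_of_length_eq_zero h0).symm
      have hsum : (p.takeUntil w hwmem).length + (p.dropUntil w hwmem).length = p.length := by
        rw [← Walk.length_append, p.take_spec hwmem]
      have hlt : G.dist v w < G.dist v x := by omega
      have hxv : x ≠ v := by
        rintro rfl
        rw [G.dist_self] at hlt
        omega
      have hxC : ¬ AReach G v x t := by
        rintro ⟨q, hq⟩
        have hvdrop : v ∉ (p.dropUntil w hwmem).support := by
          intro hv'
          have hsplit : p.support =
              (p.takeUntil w hwmem).support ++ (p.dropUntil w hwmem).support.tail := by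
            conv_lhs => rw [← p.take_spec hwmem]
            rw [Walk.support_append]
          have hpn := hp.support_nodup
          rw [hsplit] at hpn
          have hvtake : v ∈ (p.takeUntil w hwmem).support := Walk.start_mem_support _
          have hvtail : v ∈ (p.dropUntil w hwmem).support.tail := by
            rw [Walk.support_eq_cons] at hv'
            rcases List.mem_cons.mp hv' with h | h
            · exact absurd h.symm hwv
            · exact h
          exact (List.disjoint_of_nodup_append hpn) hvtake hvtail
        apply hwt
        refine ⟨(p.dropUntil w hwmem).append q, ?_⟩
        rw [Walk.support_append]
        intro hc
        rcases List.mem_append.mp hc with h | h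
        · exact hvdrop h
        · exact hq (List.mem_of_mem_tail h)
      exact absurd (hmax x hxv hxC) (by omega)
    · exact ⟨p, hwmem⟩
  have hne : ∃ x : V, x ≠ w := by
    obtain ⟨b, hb⟩ := Fintype.exists_ne_of_one_lt_card (by omega) w
    exact ⟨b, hb⟩
  rw [mem_noncut_iff hne]
  intro x y hx hy
  exact (key x hx).symm.trans (key y hy)

/-- For a cut vertex on a cycle, there is a non-cut vertex "assigned" to it. -/
lemma exists_good [Fintype V] [DecidableEq V] (hG : G.Connected) (hcard : 3 ≤ Fintype.card V)
    {u v : V} (W : G.Walk u u) (hW : W.IsCycle) (hv : v ∈ W.support)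
    (hcut : v ∉ noncutVerts G) :
    ∃ w, w ∈ noncutVerts G ∧ w ≠ v ∧ ∀ z ∈ W.support, z ≠ v → ¬ AReach G v w z := by
  classical
  have hne : ∃ x : V, x ≠ v := by
    obtain ⟨b, hb⟩ := Fintype.exists_ne_of_one_lt_card (by omega) v
    exact ⟨b, hb⟩
  -- pick t on the cycle, t ≠ v
  have htail : W.support.tail.Nodup := hW.support_nodup
  have htaillen : W.support.tail.length = W.length := by
    have h1 := W.length_support
    have h2 : W.support.tail.length = W.support.length - 1 := W.support.length_tail
    omega
  have hcard3 : 1 < W.support.tail.toFinset.card := by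
    rw [List.toFinset_card_of_nodup htail, htaillen]
    have := hW.three_le_length
    omega
  obtain ⟨t, htmem, htv⟩ := Finset.exists_mem_ne hcard3 v
  have ht : t ∈ W.support := List.mem_of_mem_tail (List.mem_toFinset.mp htmem)
  -- the branch C
  rw [mem_noncut_iff hne] at hcut
  push_neg at hcut
  obtain ⟨x, y, hx, hy, hxy⟩ := hcut
  have hC : ∃ x, x ≠ v ∧ ¬ AReach G v x t := by
    by_cases h1 : AReach G v x t
    · exact ⟨y, hy, fun h2 => hxy (h1.trans h2.symm)⟩
    · exact ⟨x, hx, h1⟩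
  set C : Set V := {x | x ≠ v ∧ ¬ AReach G v x t} with hCdef
  obtain ⟨w, hwC, hwmax⟩ := Set.exists_max_image C (fun x => G.dist v x) (Set.toFinite C) hC
  have hwnc : w ∈ noncutVerts G :=
    farthest_noncut hG hcard hwC.1 hwC.2 (fun x hx1 hx2 => hwmax x ⟨hx1, hx2⟩)
  refine ⟨w, hwnc, hwC.1, ?_⟩
  intro z hz hzv hA
  exact hwC.2 (hA.trans (cycle_aReach W hW hv hz ht hzv htv))

end StmtAux

open StmtAux in
theorem stmt_12 [Fintype V] (G : SimpleGraph V)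
    (hn : 3 ≤ Fintype.card V) (hG : G.Connected)
    (c : ℕ) (u : V) (W : G.Walk u u) (hW : W.IsCycle) (hlen : W.length = c) :
    c ≤ (noncutVerts G).ncard := by
  classical
  subst hlen
  set T : Finset V := W.support.tail.toFinset with hT
  have htail : W.support.tail.Nodup := hW.support_nodup
  have hTcard : T.card = W.length := by
    rw [hT, List.toFinset_card_of_nodup htail]
    have h1 := W.length_support
    have h2 : W.support.tail.length = W.support.length - 1 := W.support.length_tail
    omega
  have hmemT : ∀ v ∈ T, v ∈ W.support := fun v hv =>
    List.mem_of_mem_tail (List.mem_toFinset.mp hv)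
  choose! f hf using fun (v : V) (h : v ∈ W.support ∧ v ∉ noncutVerts G) =>
    exists_good hG hn W hW h.1 h.2
  set g : V → V := fun v => if v ∈ noncutVerts G then v else f v with hg
  have hg1 : ∀ v ∈ T, g v ∈ noncutVerts G := by
    intro v hv
    by_cases h : v ∈ noncutVerts G
    · simp [hg, h]
    · simpa [hg, h] using (hf v ⟨hmemT v hv, h⟩).1
  have hg2 : Set.InjOn g ↑T := by
    intro v hv v' hv' heq
    by_contra hne
    by_cases h : v ∈ noncutVerts G <;> by_cases h' : v' ∈ noncutVerts G
    · rw [hg] at heq; simp [h, h'] at heq; exact hne heq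
    · obtain ⟨_, hfne, hfr⟩ := hf v' ⟨hmemT v' hv', h'⟩
      rw [hg] at heq; simp [h, h'] at heq
      refine hfr v (hmemT v hv) hne ?_
      rw [← heq]
      exact AReach.refl hne
    · obtain ⟨_, hfne, hfr⟩ := hf v ⟨hmemT v hv, h⟩
      rw [hg] at heq; simp [h, h'] at heq
      refine hfr v' (hmemT v' hv') (Ne.symm hne) ?_
      rw [heq]
      exact AReach.refl (Ne.symm hne)
    · obtain ⟨_, hfnv, hfrv⟩ := hf v ⟨hmemT v hv, h⟩
      obtain ⟨_, hfnv', hfrv'⟩ := hf v' ⟨hmemT v' hv', h'⟩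
      rw [hg] at heq; simp [h, h'] at heq
      set w := f v with hwdef
      have hA : ¬ AReach G v w v' := hfrv v' (hmemT v' hv') (Ne.symm hne)
      have hB : ¬ AReach G v' w v := heq ▸ hfrv' v (hmemT v hv) hne
      obtain ⟨p0⟩ := hG.preconnected w v
      have hp : p0.bypass.IsPath := p0.bypass_isPath
      set p := p0.bypass with hpdef
      have hv'mem : v' ∈ p.support := by
        by_contra hcon
        exact hB ⟨p, hcon⟩
      refine hA ⟨p.takeUntil v' hv'mem, ?_⟩
      exact end_not_mem_takeUntil p hp.support_nodup hv'mem hne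
  have hfin : (noncutVerts G).Finite := Set.toFinite _
  have hcount : T.card ≤ hfin.toFinset.card := by
    apply Finset.card_le_card_of_injOn g
    · intro v hv
      rw [Finset.mem_coe, Set.Finite.mem_toFinset]
      exact hg1 v hv
    · exact hg2
  rw [← hTcard]
  rwa [Set.ncard_eq_toFinset_card _ hfin]
end

section
/- Let G be a connected graph of order n and S ⊆ V(G) a set of k vertices such that every vertex of V(G) \ S is a cut vertex of G. Then d_G(S) = n - 1, i.e., every S-Steiner tree is a spanning tree of G. -/
open SimpleGraph

variable {V : Type*}

section Aux
variable {W : Type*} {G : SimpleGraph W}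

/-- The inclusion homomorphism from an induced subgraph. -/
def inducedHom (G : SimpleGraph W) (s : Set W) : G.induce s →g G :=
  ⟨Subtype.val, fun h => h⟩

lemma reachable_of_walk_in {s : Set W} :
    ∀ {a b : W} (p : G.Walk a b), (∀ x ∈ p.support, x ∈ s) →
      ∀ (ha : a ∈ s) (hb : b ∈ s), (G.induce s).Reachable ⟨a, ha⟩ ⟨b, hb⟩ := by
  intro a b p
  induction p with
  | nil => intro _ _ _; exact Reachable.refl _
  | @cons a c b h q ih =>
    intro hp ha hb
    have hc : c ∈ s := hp c (by simp)
    have hadj : (G.induce s).Adj ⟨a, ha⟩ ⟨c, hc⟩ := h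
    exact hadj.reachable.trans (ih (fun x hx => hp x (by simp [hx])) hc hb)

lemma induce_connected_iff' {s : Set W} :
    (G.induce s).Connected ↔ s.Nonempty ∧
      ∀ a ∈ s, ∀ b ∈ s, ∃ p : G.Walk a b, ∀ x ∈ p.support, x ∈ s := by
  constructor
  · intro h
    refine ⟨?_, ?_⟩
    · obtain ⟨x⟩ := h.nonempty
      exact ⟨x, x.2⟩
    · intro a ha b hb
      obtain ⟨p⟩ := h.preconnected ⟨a, ha⟩ ⟨b, hb⟩
      refine ⟨p.map (inducedHom G s), ?_⟩
      intro x hx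
      replace hx := Eq.mp (congrArg (x ∈ ·) (Walk.support_map (inducedHom G s) p)) hx
      obtain ⟨y, -, rfl⟩ := List.mem_map.mp hx
      exact y.2
  · rintro ⟨⟨a, ha⟩, h⟩
    rw [connected_iff]
    refine ⟨?_, ⟨⟨a, ha⟩⟩⟩
    rintro ⟨x, hx⟩ ⟨y, hy⟩
    obtain ⟨p, hp⟩ := h x hx y hy
    exact reachable_of_walk_in p hp hx hy

lemma reachable_delete_of_walk {v w : W}
    (hvw : (G \ fromEdgeSet {s(v, w)}).Reachable v w) :
    ∀ {a b : W}, G.Walk a b → (G \ fromEdgeSet {s(v, w)}).Reachable a b := by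
  intro a b p
  induction p with
  | nil => exact Reachable.refl _
  | @cons a c b h q ih =>
    refine Reachable.trans ?_ ih
    by_cases he : s(a, c) = s(v, w)
    · rw [Sym2.eq_iff] at he
      rcases he with ⟨rfl, rfl⟩ | ⟨rfl, rfl⟩
      · exact hvw
      · exact hvw.symm
    · refine Adj.reachable ?_
      rw [sdiff_adj]
      refine ⟨h, fun hadj => ?_⟩
      rw [fromEdgeSet_adj] at hadj
      exact he (by simpa using hadj.1)

lemma exists_spanning_tree_s17 [Fintype W] :
    ∀ (n : ℕ) (G : SimpleGraph W), G.edgeSet.ncard = n → G.Connected →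
      ∃ T : SimpleGraph W, T ≤ G ∧ T.IsTree := by
  intro n
  induction n using Nat.strong_induction_on with
  | _ n ih =>
    intro G hn hG
    by_cases hac : G.IsAcyclic
    · exact ⟨G, le_rfl, ⟨hG, hac⟩⟩
    · rw [isAcyclic_iff_forall_adj_isBridge] at hac
      push_neg at hac
      obtain ⟨v, w, hadj, hnb⟩ := hac
      have hvw : (G \ fromEdgeSet {s(v, w)}).Reachable v w := by
        rw [isBridge_iff] at hnb
        push_neg at hnb
        exact hnb
      have hG'conn : (G \ fromEdgeSet {s(v, w)}).Connected := by
        rw [connected_iff] at hG ⊢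
        exact ⟨fun a b => reachable_delete_of_walk hvw (hG.1 a b).some, hG.2⟩
      have hedge : (G \ fromEdgeSet {s(v, w)}).edgeSet = G.edgeSet \ {s(v, w)} := by
        rw [edgeSet_sdiff, edgeSet_fromEdgeSet, edgeSet_sdiff_sdiff_isDiag]
      have hmem : s(v, w) ∈ G.edgeSet := hadj
      have hlt : (G \ fromEdgeSet {s(v, w)}).edgeSet.ncard < n := by
        rw [← hn, hedge]
        exact Set.ncard_lt_ncard ⟨Set.diff_subset, fun h => (h hmem).2 rfl⟩ (Set.toFinite _)
      obtain ⟨T, hTle, hT⟩ := ih _ hlt _ rfl hG'conn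
      exact ⟨T, hTle.trans sdiff_le, hT⟩

lemma tree_ncard_edgeSet [Fintype W] {T : SimpleGraph W} (hT : T.IsTree) :
    T.edgeSet.ncard = Fintype.card W - 1 := by
  classical
  have inst : Fintype T.edgeSet := Fintype.ofFinite _
  rw [Set.ncard_eq_toFinset_card']
  have := hT.card_edgeFinset
  rw [edgeFinset] at this
  omega

lemma connected_card_le [Fintype W] {G : SimpleGraph W} (hG : G.Connected) :
    Fintype.card W - 1 ≤ G.edgeSet.ncard := by
  obtain ⟨T, hle, hT⟩ := exists_spanning_tree_s17 _ G rfl hG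
  calc Fintype.card W - 1 = T.edgeSet.ncard := (tree_ncard_edgeSet hT).symm
    _ ≤ G.edgeSet.ncard := Set.ncard_le_ncard (edgeSet_subset_edgeSet.2 hle) (Set.toFinite _)


lemma verts_eq_univ [Fintype W] (hG : G.Connected) (H : G.Subgraph) (hH : H.Connected)
    (hcut : ∀ u : W, u ∉ H.verts → ¬ (G.induce ({u}ᶜ : Set W)).Connected) :
    H.verts = Set.univ := by
  classical
  by_contra hne
  obtain ⟨v, hv⟩ : ∃ v, v ∉ H.verts := by
    rw [← Set.ne_univ_iff_exists_notMem]; exact hne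
  obtain ⟨w, hw⟩ := hH.nonempty
  have hwv : w ≠ v := fun h => hv (h ▸ hw)
  set R : Set W := {x | ∃ p : G.Walk w x, v ∉ p.support} with hR
  have hwR : w ∈ R := ⟨Walk.nil, by simp [hwv.symm]⟩
  have hHR : ∀ x ∈ H.verts, x ∈ R := by
    intro x hx
    obtain ⟨p, hp⟩ := (Subgraph.preconnected_iff_forall_exists_walk_subgraph H).mp
      hH.preconnected hw hx
    refine ⟨p, fun hmem => hv ?_⟩
    have : p.toSubgraph.verts ⊆ H.verts := hp.1
    exact this (by rw [Walk.verts_toSubgraph]; exact hmem)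
  have hvR : v ∉ R := fun ⟨p, hp⟩ => hp p.end_mem_support
  -- the complement side is nonempty
  have hdisc := hcut v hv
  rw [induce_connected_iff'] at hdisc
  push_neg at hdisc
  obtain ⟨a, ha, b, hb, hab⟩ := hdisc ⟨w, hwv⟩
  have hx0 : ∃ x0, x0 ≠ v ∧ x0 ∉ R := by
    by_contra hc
    push_neg at hc
    obtain ⟨pa, hpa⟩ := hc a ha
    obtain ⟨pb, hpb⟩ := hc b hb
    obtain ⟨x, hx1, hx2⟩ := hab (pa.reverse.append pb)
    rw [Walk.mem_support_append_iff, Walk.support_reverse, List.mem_reverse] at hx1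
    have hxv : x = v := by simpa using hx2
    subst hxv
    rcases hx1 with h | h
    exacts [hpa h, hpb h]
  -- choose u in the far side at maximal distance from v
  obtain ⟨x0, hx0v, hx0R⟩ := hx0
  obtain ⟨u, hu, hmax⟩ := Finset.exists_max_image
    (Finset.univ.filter (fun x => x ≠ v ∧ x ∉ R)) (fun x => G.dist v x)
    ⟨x0, by simp [hx0v, hx0R]⟩
  rw [Finset.mem_filter] at hu
  obtain ⟨-, huv, huR⟩ := hu
  -- every vertex other than u is joined to v avoiding u
  have key : ∀ a : W, a ≠ u → ∃ p : G.Walk v a, u ∉ p.support := by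
    intro a hau
    by_cases haR : a ∈ R
    · obtain ⟨q, hq⟩ := haR
      have hqu : u ∉ q.support := fun h =>
        huR ⟨q.takeUntil u h, fun hv' => hq (q.support_takeUntil_subset h hv')⟩
      obtain ⟨t⟩ := hG.preconnected v w
      have hPu : u ∉ t.toPath.1.support := by
        intro hmem
        apply huR
        refine ⟨(t.toPath.1.dropUntil u hmem).reverse, ?_⟩
        rw [Walk.support_reverse, List.mem_reverse]
        intro hvmem
        have hnodup : ((t.toPath.1.takeUntil u hmem).support ++
            (t.toPath.1.dropUntil u hmem).support.tail).Nodup := by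
          rw [← Walk.support_append, Walk.take_spec]
          exact t.toPath.2.2
        have hv1 : v ∈ (t.toPath.1.takeUntil u hmem).support := Walk.start_mem_support _
        have hv2 : v ∈ (t.toPath.1.dropUntil u hmem).support.tail := by
          have := (t.toPath.1.dropUntil u hmem).support_eq_cons
          rw [this] at hvmem
          rcases List.mem_cons.mp hvmem with h | h
          · exact absurd h.symm huv
          · exact h
        exact List.disjoint_of_nodup_append hnodup hv1 hv2
      refine ⟨t.toPath.1.append q, ?_⟩
      rw [Walk.mem_support_append_iff]
      rintro (h | h)
      exacts [hPu h, hqu h]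
    · by_cases hav : a = v
      · subst hav
        exact ⟨Walk.nil, by simp [huv]⟩
      · obtain ⟨p, hp⟩ := (hG.preconnected v a).exists_walk_length_eq_dist
        refine ⟨p, fun hmem => ?_⟩
        have h1 : G.dist v u ≤ (p.takeUntil u hmem).length := dist_le _
        have h2 : G.dist u a ≤ (p.dropUntil u hmem).length := dist_le _
        have h3 : (p.takeUntil u hmem).length + (p.dropUntil u hmem).length = p.length := by
          rw [← Walk.length_append, Walk.take_spec]
        have h4 : 0 < G.dist u a :=
          (hG.preconnected u a).pos_dist_of_ne (Ne.symm hau)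
        have h5 : G.dist v a ≤ G.dist v u := hmax a (by simp [hav, haR])
        omega
  -- contradiction: u is a non-cut vertex outside H.verts
  have huH : u ∉ H.verts := fun h => huR (hHR u h)
  apply hcut u huH
  rw [induce_connected_iff']
  refine ⟨⟨v, Ne.symm huv⟩, ?_⟩
  intro a ha b hb
  obtain ⟨pa, hpa⟩ := key a ha
  obtain ⟨pb, hpb⟩ := key b hb
  refine ⟨pa.reverse.append pb, ?_⟩
  intro x hx
  rw [Walk.mem_support_append_iff, Walk.support_reverse, List.mem_reverse] at hx
  simp only [Set.mem_compl_iff, Set.mem_singleton_iff]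
  rcases hx with h | h
  · rintro rfl; exact hpa h
  · rintro rfl; exact hpb h

end Aux

theorem stmt_17 [Fintype V] (G : SimpleGraph V) (hG : G.Connected)
    (k : ℕ) (S : Finset V) (hS : S.card = k)
    (hcut : ∀ v : V, v ∉ S → ¬ (G.induce ({v}ᶜ : Set V)).Connected) :
    steinerDist G S = Fintype.card V - 1 := by
  classical
  obtain ⟨T, hle, hT⟩ := exists_spanning_tree_s17 _ G rfl hG
  have hH0conn : (SimpleGraph.toSubgraph T hle).Connected := by
    rw [Subgraph.connected_iff']
    exact ((SimpleGraph.toSubgraph T hle).spanningCoeEquivCoeOfSpanning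
      (SimpleGraph.toSubgraph.isSpanning T hle)).connected_iff.mp hT.isConnected
  have hedgeeq : (SimpleGraph.toSubgraph T hle).edgeSet = T.edgeSet := by
    ext e
    refine Sym2.ind (fun a b => ?_) e
    exact Iff.rfl
  have hm : Fintype.card V - 1 ∈
      {m | ∃ H : G.Subgraph, H.Connected ∧ ↑S ⊆ H.verts ∧ H.edgeSet.ncard = m} := by
    refine ⟨SimpleGraph.toSubgraph T hle, hH0conn, ?_, ?_⟩
    · intro x _; exact Set.mem_univ x
    · rw [hedgeeq]; exact tree_ncard_edgeSet hT
  refine le_antisymm (Nat.sInf_le hm) (le_csInf ⟨_, hm⟩ ?_)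
  rintro m ⟨H, hHconn, hSsub, rfl⟩
  have hverts : H.verts = Set.univ :=
    verts_eq_univ hG H hHconn (fun u hu => hcut u (fun hSm => hu (hSsub hSm)))
  have hspan : H.IsSpanning := fun x => hverts ▸ Set.mem_univ x
  have hsc : H.spanningCoe.Connected :=
    (H.spanningCoeEquivCoeOfSpanning hspan).connected_iff.mpr
      (Subgraph.connected_iff'.mp hHconn)
  have hedge : H.spanningCoe.edgeSet = H.edgeSet := by
    ext e
    refine Sym2.ind (fun a b => ?_) e
    exact Iff.rfl
  calc Fintype.card V - 1 ≤ H.spanningCoe.edgeSet.ncard := connected_card_le hsc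
    _ = H.edgeSet.ncard := by rw [hedge]
end
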